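/- arXiv:2004.00469 — 5 statements merged into one kernel-verified Lean document; each statement's English description precedes it below -/
import Mathlib

section
/- (Weak law of large numbers for incremental sums.) Let X_k(m) be real random variables, independent in k, integrable, with E[X_k(m)] = 0 for all k and m > 0. Assume: (W1) for every ε > 0, sup_k P(|X_k(m)| > ε) → 0 as m → ∞; (W2) lim_{A→∞} sup_{k,m} E[|X_k(m)| · 1{|X_k(m)| > A}] = 0. Then for any positive mass sequence m with ∑ m_k = ∞, setting S_n = ∑_{k=1}^n (m_k / M_n) X_k(m_k), we have S_n → 0 in probability. -/
open MeasureTheory ProbabilityTheory Filter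
open scoped ENNReal Topology BigOperators

noncomputable section

/-- Partial sums of the masses: `Mpart m n = ∑_{k=1}^n m k`. -/
def Mpart (m : ℕ → ℝ) (n : ℕ) : ℝ := ∑ k ∈ Finset.Icc 1 n, m k

set_option maxHeartbeats 1000000 in
/-- Weak law of large numbers for incremental sums. -/
theorem weak_lln_incremental
    {Ω : Type*} [MeasureSpace Ω] [IsProbabilityMeasure (ℙ : Measure Ω)]
    (X : ℕ → ℝ → Ω → ℝ)
    (hmeas : ∀ k m, Measurable (X k m))
    (hint : ∀ k m, 0 < m → Integrable (X k m) ℙ)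
    (hInd : ∀ f : ℕ → ℝ, iIndepFun (fun k => X k (f k)) ℙ)
    (hC : ∀ k m, 0 < m → ∫ ω, X k m ω ∂ℙ = 0)
    (hW1 : ∀ ε > (0:ℝ), ∀ δ > (0:ℝ), ∃ M₀ : ℝ, ∀ m ≥ M₀, ∀ k,
      ℙ {ω | ε < |X k m ω|} < ENNReal.ofReal δ)
    (hW2 : ∀ δ > (0:ℝ), ∃ A : ℝ, ∀ k m, 0 < m →
      ∫ ω in {ω | A < |X k m ω|}, |X k m ω| ∂ℙ < δ)
    (m : ℕ → ℝ) (hm : ∀ k, 0 < m k)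
    (hdiv : Tendsto (Mpart m) atTop atTop) :
    ∀ ε > (0:ℝ), Tendsto
      (fun n => ℙ {ω | ε < |∑ k ∈ Finset.Icc 1 n, (m k / Mpart m n) * X k (m k) ω|})
      atTop (𝓝 0) := by
  intro ε hε
  rw [ENNReal.tendsto_nhds_zero]
  intro εδ hεδ
  -- reduce to a real tolerance δ'
  obtain ⟨δ', hδ'pos, hδ'le⟩ : ∃ δ' : ℝ, 0 < δ' ∧ ENNReal.ofReal δ' ≤ εδ := by
    rcases eq_or_ne εδ ⊤ with h | h
    · exact ⟨1, one_pos, by simp [h]⟩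
    · exact ⟨εδ.toReal, ENNReal.toReal_pos hεδ.ne' h, by rw [ENNReal.ofReal_toReal h]⟩
  set ξ : ℕ → Ω → ℝ := fun k => X k (m k) with hξ
  have hξmeas : ∀ k, Measurable (ξ k) := fun k => hmeas k (m k)
  have hξint : ∀ k, Integrable (ξ k) ℙ := fun k => hint k (m k) (hm k)
  have hξC : ∀ k, ∫ ω, ξ k ω ∂ℙ = 0 := fun k => hC k (m k) (hm k)
  -- choose the truncation parameters
  set δ₁ : ℝ := min (ε * δ' / 4) (ε / 8) with hδ₁def
  have hδ₁pos : 0 < δ₁ := lt_min (by positivity) (by positivity)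
  obtain ⟨A₀, hA₀⟩ := hW2 δ₁ hδ₁pos
  set A : ℝ := max A₀ 1 with hAdef
  have hA1 : (1:ℝ) ≤ A := le_max_right _ _
  have hApos : (0:ℝ) < A := lt_of_lt_of_le one_pos hA1
  have hA : ∀ k, ∫ ω in {ω | A < |ξ k ω|}, |ξ k ω| ∂ℙ < δ₁ := by
    intro k
    have hsub : {ω | A < |ξ k ω|} ⊆ {ω | A₀ < |ξ k ω|} := by
      intro ω h
      simp only [Set.mem_setOf_eq] at *
      exact lt_of_le_of_lt (le_max_left _ _) h
    have hmono : ∫ ω in {ω | A < |ξ k ω|}, |ξ k ω| ∂ℙ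
        ≤ ∫ ω in {ω | A₀ < |ξ k ω|}, |ξ k ω| ∂ℙ :=
      setIntegral_mono_set ((hξint k).abs.integrableOn)
        (Filter.Eventually.of_forall fun ω => abs_nonneg _)
        (HasSubset.Subset.eventuallyLE hsub)
    exact lt_of_le_of_lt hmono (hA₀ k (m k) (hm k))
  set ε' : ℝ := Real.sqrt (δ' * ε ^ 2 / 256) with hε'def
  have hε'pos : 0 < ε' := Real.sqrt_pos.2 (by positivity)
  have hε'sq : ε' ^ 2 = δ' * ε ^ 2 / 256 := Real.sq_sqrt (by positivity)
  set δ₂ : ℝ := δ' * ε ^ 2 / (256 * A ^ 2) with hδ₂def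
  have hδ₂pos : 0 < δ₂ := by positivity
  obtain ⟨M₁, hM₁⟩ := hW1 ε' hε'pos δ₂ hδ₂pos
  set M₀ : ℝ := max M₁ 0 with hM₀def
  have hM₀nonneg : 0 ≤ M₀ := le_max_right _ _
  have hM : ∀ k, M₀ ≤ m k → (ℙ {ω | ε' < |ξ k ω|}).toReal ≤ δ₂ := by
    intro k hk
    exact ENNReal.toReal_le_of_le_ofReal hδ₂pos.le
      (le_of_lt (hM₁ (m k) (le_trans (le_max_left _ _) hk) k))
  -- truncated variables
  set Y : ℕ → Ω → ℝ := fun k ω => if |ξ k ω| ≤ A then ξ k ω else 0 with hYdef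
  set Z : ℕ → Ω → ℝ := fun k ω => ξ k ω - Y k ω with hZdef
  have hYmeas : ∀ k, Measurable (Y k) := by
    intro k
    exact Measurable.ite (measurableSet_le (hξmeas k).abs measurable_const)
      (hξmeas k) measurable_const
  have hYbd : ∀ k ω, |Y k ω| ≤ A := by
    intro k ω
    by_cases h : |ξ k ω| ≤ A
    · simpa [hYdef, h] using h
    · simp [hYdef, h, hApos.le]
  have hY2 : ∀ k, MemLp (Y k) 2 ℙ := by
    intro k
    exact MemLp.of_bound (hYmeas k).aestronglyMeasurable A
      (Filter.Eventually.of_forall fun ω => by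
        simpa [Real.norm_eq_abs] using hYbd k ω)
  have hYint : ∀ k, Integrable (Y k) ℙ := fun k => (hY2 k).integrable one_le_two
  have hZint : ∀ k, Integrable (Z k) ℙ := fun k => (hξint k).sub (hYint k)
  have hZabs : ∀ k, (fun ω => |Z k ω|)
      = Set.indicator {ω | A < |ξ k ω|} (fun ω => |ξ k ω|) := by
    intro k
    funext ω
    by_cases h : |ξ k ω| ≤ A
    · simp [hZdef, hYdef, h, Set.indicator_of_notMem, not_lt.2 h,
        Set.mem_setOf_eq]
    · have h' : A < |ξ k ω| := not_le.1 h
      simp [hZdef, hYdef, h, Set.indicator_of_mem, h', Set.mem_setOf_eq]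
  have hZint_abs : ∀ k, ∫ ω, |Z k ω| ∂ℙ ≤ δ₁ := by
    intro k
    rw [hZabs k, integral_indicator ((measurableSet_lt measurable_const (hξmeas k).abs))]
    exact (hA k).le
  have hYmean : ∀ k, |∫ ω, Y k ω ∂ℙ| ≤ δ₁ := by
    intro k
    have h1 : ∫ ω, Y k ω ∂ℙ = - ∫ ω, Z k ω ∂ℙ := by
      have := integral_sub (hξint k) (hYint k)
      simp only [hZdef] at *
      rw [this, hξC k] at *
      ring
    rw [h1, abs_neg]
    have h2 := norm_integral_le_integral_norm (μ := (ℙ : Measure Ω)) (Z k)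
    simp only [Real.norm_eq_abs] at h2
    exact le_trans h2 (hZint_abs k)
  -- variance bounds for the truncated variables
  have hYvar : ∀ k, variance (Y k) ℙ
      ≤ ε' ^ 2 + A ^ 2 * (ℙ {ω | ε' < |ξ k ω|}).toReal := by
    intro k
    have hYle : ∀ ω, |Y k ω| ≤ |ξ k ω| := by
      intro ω
      by_cases h : |ξ k ω| ≤ A <;> simp [hYdef, h, abs_nonneg]
    refine le_trans (variance_le_expectation_sq (hYmeas k).aestronglyMeasurable) ?_
    have hs : MeasurableSet {ω | ε' < |ξ k ω|} :=
      measurableSet_lt measurable_const (hξmeas k).abs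
    have hpt : ∀ ω, (Y k ^ 2) ω
        ≤ ε' ^ 2 + Set.indicator {ω | ε' < |ξ k ω|} (fun _ => A ^ 2) ω := by
      intro ω
      simp only [Pi.pow_apply]
      by_cases h2 : ε' < |ξ k ω|
      · rw [Set.indicator_of_mem (show ω ∈ {ω | ε' < |ξ k ω|} from h2)]
        have h3 : (Y k ω) ^ 2 ≤ A ^ 2 := by
          have := hYbd k ω
          have h4 := abs_le.1 this
          nlinarith [h4.1, h4.2]
        nlinarith [sq_nonneg ε']
      · rw [Set.indicator_of_notMem (show ω ∉ {ω | ε' < |ξ k ω|} from h2)]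
        have h3 : |Y k ω| ≤ ε' := le_trans (hYle ω) (not_lt.1 h2)
        have h4 := abs_le.1 h3
        nlinarith [h4.1, h4.2]
    have hint1 : Integrable (Y k ^ 2) ℙ := (hY2 k).integrable_sq
    have hint2 : Integrable
        (fun ω => ε' ^ 2 + Set.indicator {ω | ε' < |ξ k ω|} (fun _ => A ^ 2) ω) ℙ :=
      (integrable_const _).add ((integrable_const _).indicator hs)
    refine le_trans (integral_mono hint1 hint2 hpt) ?_
    rw [integral_add (integrable_const _) ((integrable_const _).indicator hs),
      integral_indicator_const _ hs, integral_const]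
    simp [mul_comm]
    exact le_rfl
  have hYvarA : ∀ k, variance (Y k) ℙ ≤ A ^ 2 := by
    intro k
    refine le_trans (variance_le_expectation_sq (hYmeas k).aestronglyMeasurable) ?_
    have hpt : ∀ ω, (Y k ^ 2) ω ≤ A ^ 2 := by
      intro ω
      simp only [Pi.pow_apply]
      have h4 := abs_le.1 (hYbd k ω)
      nlinarith [h4.1, h4.2]
    refine le_trans (integral_mono ((hY2 k).integrable_sq) (integrable_const _) hpt) ?_
    simp
  -- the eventual bound
  set B : ℝ := 64 * A ^ 2 * M₀ / (ε ^ 2 * δ') with hBdef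
  filter_upwards [hdiv.eventually_ge_atTop (max 1 B)] with n hn
  set Mn : ℝ := Mpart m n with hMndef
  have hMn1 : (1:ℝ) ≤ Mn := le_trans (le_max_left _ _) hn
  have hMnB : B ≤ Mn := le_trans (le_max_right _ _) hn
  have hMnpos : 0 < Mn := lt_of_lt_of_le one_pos hMn1
  set K : Finset ℕ := Finset.Icc 1 n with hKdef
  set w : ℕ → ℝ := fun k => m k / Mn with hwdef
  have hw0 : ∀ k, 0 ≤ w k := fun k => div_nonneg (hm k).le hMnpos.le
  have hwsum : ∑ k ∈ K, w k = 1 := by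
    rw [hwdef]
    simp only
    rw [← Finset.sum_div]
    rw [hMndef, Mpart, hKdef]
    exact div_self (by positivity)
  have hwle : ∀ k ∈ K, w k ≤ 1 := by
    intro k hk
    have : w k ≤ ∑ j ∈ K, w j := Finset.single_le_sum (fun j _ => hw0 j) hk
    rwa [hwsum] at this
  set T : Ω → ℝ := fun ω => ∑ k ∈ K, w k * Y k ω with hTdef
  set U : Ω → ℝ := fun ω => ∑ k ∈ K, w k * Z k ω with hUdef
  have hSsplit : ∀ ω, ∑ k ∈ K, w k * ξ k ω = T ω + U ω := by
    intro ω
    rw [hTdef, hUdef]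
    simp only
    rw [← Finset.sum_add_distrib]
    refine Finset.sum_congr rfl fun k _ => ?_
    rw [hZdef]; ring
  -- union bound
  have hsub : {ω | ε < |∑ k ∈ K, w k * ξ k ω|}
      ⊆ {ω | ε/2 ≤ |T ω|} ∪ {ω | ε/2 ≤ |U ω|} := by
    intro ω hω
    simp only [Set.mem_setOf_eq] at hω
    by_contra hcon
    simp only [Set.mem_union, Set.mem_setOf_eq, not_or, not_le] at hcon
    have := hSsplit ω
    have habs : |∑ k ∈ K, w k * ξ k ω| ≤ |T ω| + |U ω| := this ▸ abs_add_le _ _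
    linarith [hcon.1, hcon.2]
  have hbound : ℙ {ω | ε < |∑ k ∈ K, w k * ξ k ω|}
      ≤ ℙ {ω | ε/2 ≤ |T ω|} + ℙ {ω | ε/2 ≤ |U ω|} :=
    le_trans (measure_mono hsub) (measure_union_le _ _)
  -- bound for U
  have hUbound : ℙ {ω | ε/2 ≤ |U ω|} ≤ ENNReal.ofReal (δ'/2) := by
    have hUint : Integrable U ℙ := by
      rw [hUdef]
      exact integrable_finset_sum K (fun k _ => ((hZint k).const_mul (w k)))
    have habs : ∀ ω, |U ω| ≤ ∑ k ∈ K, w k * |Z k ω| := by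
      intro ω
      refine le_trans (Finset.abs_sum_le_sum_abs _ _) ?_
      refine Finset.sum_le_sum fun k _ => ?_
      rw [abs_mul, abs_of_nonneg (hw0 k)]
    have hintsum : Integrable (fun ω => ∑ k ∈ K, w k * |Z k ω|) ℙ :=
      integrable_finset_sum _ (fun k _ => ((hZint k).abs.const_mul _))
    have hintU : ∫ ω, |U ω| ∂ℙ ≤ δ₁ := by
      refine le_trans (integral_mono hUint.abs hintsum habs) ?_
      rw [integral_finset_sum _ (fun k _ => ((hZint k).abs.const_mul _))]
      have h2 : ∑ k ∈ K, ∫ ω, w k * |Z k ω| ∂ℙ ≤ ∑ k ∈ K, w k * δ₁ := by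
        refine Finset.sum_le_sum fun k _ => ?_
        rw [integral_const_mul]
        exact mul_le_mul_of_nonneg_left (hZint_abs k) (hw0 k)
      rw [← Finset.sum_mul, hwsum, one_mul] at h2
      exact h2
    have hmar := mul_meas_ge_le_integral_of_nonneg
      (Filter.Eventually.of_forall fun ω => abs_nonneg (U ω)) hUint.abs (ε/2)
    have htr : (ℙ {ω | ε/2 ≤ |U ω|}).toReal ≤ δ'/2 := by
      have hδ₁a : δ₁ ≤ ε * δ' / 4 := min_le_left _ _
      have h3 : (ε/2) * (ℙ {ω | ε/2 ≤ |U ω|}).toReal ≤ ε * δ' / 4 :=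
        le_trans hmar (le_trans hintU hδ₁a)
      nlinarith [ENNReal.toReal_nonneg (a := ℙ {ω | ε/2 ≤ |U ω|})]
    calc ℙ {ω | ε/2 ≤ |U ω|}
        = ENNReal.ofReal ((ℙ {ω | ε/2 ≤ |U ω|}).toReal) :=
          (ENNReal.ofReal_toReal (measure_ne_top _ _)).symm
      _ ≤ ENNReal.ofReal (δ'/2) := ENNReal.ofReal_le_ofReal htr
  -- bound for T
  have hTbound : ℙ {ω | ε/2 ≤ |T ω|} ≤ ENNReal.ofReal (δ'/2) := by
    classical
    -- express T as a function-valued finite sum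
    set W : ℕ → Ω → ℝ := fun k ω => w k * Y k ω with hWdef
    have hTW : T = ∑ k ∈ K, W k := by
      funext ω
      rw [hTdef]
      simp [hWdef, Finset.sum_apply]
    have hWmem : ∀ k ∈ K, MemLp (W k) 2 ℙ := fun k _ => (hY2 k).const_mul (w k)
    have hT2 : MemLp T 2 ℙ := by rw [hTW]; exact memLp_finset_sum' K hWmem
    -- independence of the truncated summands
    have hiY : iIndepFun W ℙ := by
      have hcomp := (hInd m).comp
        (fun k => fun x : ℝ => w k * (if |x| ≤ A then x else 0))
        (fun k => (measurable_const.mul (Measurable.ite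
          (measurableSet_le measurable_abs measurable_const)
          measurable_id measurable_const)))
      exact hcomp
    have hpair : Set.Pairwise ↑K (fun i j => IndepFun (W i) (W j) ℙ) :=
      fun i _ j _ hij => hiY.indepFun hij
    have hvar : variance T ℙ = ∑ k ∈ K, (w k)^2 * variance (Y k) ℙ := by
      rw [hTW, IndepFun.variance_sum hWmem hpair]
      exact Finset.sum_congr rfl fun k _ => variance_const_mul (w k) (Y k) ℙ
    -- variance bound
    have hsumw : ∀ s : Finset ℕ, s ⊆ K → ∑ k ∈ s, w k ≤ 1 := by
      intro s hsK
      rw [← hwsum]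
      exact Finset.sum_le_sum_of_subset_of_nonneg hsK (fun i _ _ => hw0 i)
    have hvarbound : variance T ℙ ≤ ε'^2 + A^2 * δ₂ + A^2 * M₀ / Mn := by
      rw [hvar, ← Finset.sum_filter_add_sum_filter_not K (fun k => M₀ ≤ m k)]
      have h1 : ∑ k ∈ K.filter (fun k => M₀ ≤ m k), (w k)^2 * variance (Y k) ℙ
          ≤ ε'^2 + A^2 * δ₂ := by
        have hterm : ∀ k ∈ K.filter (fun k => M₀ ≤ m k),
            (w k)^2 * variance (Y k) ℙ ≤ w k * (ε'^2 + A^2 * δ₂) := by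
          intro k hk
          obtain ⟨hkK, hkM⟩ := Finset.mem_filter.1 hk
          have hv : variance (Y k) ℙ ≤ ε'^2 + A^2 * δ₂ := by
            refine le_trans (hYvar k) ?_
            exact add_le_add_right
              (mul_le_mul_of_nonneg_left (hM k hkM) (sq_nonneg A)) _
          have hw2 : (w k)^2 ≤ w k :=
            pow_le_of_le_one (hw0 k) (hwle k hkK) (by norm_num)
          calc (w k)^2 * variance (Y k) ℙ ≤ w k * variance (Y k) ℙ :=
                mul_le_mul_of_nonneg_right hw2 (variance_nonneg _ _)
            _ ≤ w k * (ε'^2 + A^2 * δ₂) := mul_le_mul_of_nonneg_left hv (hw0 k)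
        refine le_trans (Finset.sum_le_sum hterm) ?_
        rw [← Finset.sum_mul]
        have hsle : ∑ k ∈ K.filter (fun k => M₀ ≤ m k), w k ≤ 1 :=
          hsumw _ (Finset.filter_subset _ K)
        have hnn : (0:ℝ) ≤ ε'^2 + A^2 * δ₂ := by positivity
        calc (∑ k ∈ K.filter (fun k => M₀ ≤ m k), w k) * (ε'^2 + A^2 * δ₂)
            ≤ 1 * (ε'^2 + A^2 * δ₂) := mul_le_mul_of_nonneg_right hsle hnn
          _ = ε'^2 + A^2 * δ₂ := one_mul _
      have h2 : ∑ k ∈ K.filter (fun k => ¬ M₀ ≤ m k), (w k)^2 * variance (Y k) ℙ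
          ≤ A^2 * M₀ / Mn := by
        have hterm : ∀ k ∈ K.filter (fun k => ¬ M₀ ≤ m k),
            (w k)^2 * variance (Y k) ℙ ≤ (M₀ / Mn) * (w k * A^2) := by
          intro k hk
          obtain ⟨hkK, hkM⟩ := Finset.mem_filter.1 hk
          have hmk : m k ≤ M₀ := (not_le.1 hkM).le
          have hwk : w k ≤ M₀ / Mn := by
            show m k / Mn ≤ M₀ / Mn
            gcongr
          calc (w k)^2 * variance (Y k) ℙ
              ≤ (w k)^2 * A^2 := mul_le_mul_of_nonneg_left (hYvarA k) (sq_nonneg _)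
            _ = (w k * w k) * A^2 := by rw [sq]
            _ ≤ ((M₀/Mn) * w k) * A^2 :=
                mul_le_mul_of_nonneg_right
                  (mul_le_mul_of_nonneg_right hwk (hw0 k)) (sq_nonneg _)
            _ = (M₀/Mn) * (w k * A^2) := by ring
        refine le_trans (Finset.sum_le_sum hterm) ?_
        rw [← Finset.mul_sum]
        have hle : ∑ k ∈ K.filter (fun k => ¬ M₀ ≤ m k), w k * A^2 ≤ A^2 := by
          rw [← Finset.sum_mul]
          have hsle : ∑ k ∈ K.filter (fun k => ¬ M₀ ≤ m k), w k ≤ 1 :=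
            hsumw _ (Finset.filter_subset _ K)
          calc (∑ k ∈ K.filter (fun k => ¬ M₀ ≤ m k), w k) * A^2
              ≤ 1 * A^2 := mul_le_mul_of_nonneg_right hsle (sq_nonneg A)
            _ = A^2 := one_mul _
        have hM₀Mn : (0:ℝ) ≤ M₀ / Mn := div_nonneg hM₀nonneg hMnpos.le
        calc (M₀/Mn) * ∑ k ∈ K.filter (fun k => ¬ M₀ ≤ m k), w k * A^2
            ≤ (M₀/Mn) * A^2 := mul_le_mul_of_nonneg_left hle hM₀Mn
          _ = A^2 * M₀ / Mn := by ring
      exact add_le_add h1 h2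
    -- expectation bound
    have hTmean : |∫ ω, T ω ∂ℙ| ≤ ε/8 := by
      have h1 : ∫ ω, T ω ∂ℙ = ∑ k ∈ K, w k * ∫ ω, Y k ω ∂ℙ := by
        rw [hTdef]
        rw [integral_finset_sum _ (fun k _ => (hYint k).const_mul (w k))]
        exact Finset.sum_congr rfl fun k _ => integral_const_mul _ _
      rw [h1]
      refine le_trans (Finset.abs_sum_le_sum_abs _ _) ?_
      have h2 : ∑ k ∈ K, |w k * ∫ ω, Y k ω ∂ℙ| ≤ ∑ k ∈ K, w k * δ₁ := by
        refine Finset.sum_le_sum fun k _ => ?_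
        rw [abs_mul, abs_of_nonneg (hw0 k)]
        exact mul_le_mul_of_nonneg_left (hYmean k) (hw0 k)
      rw [← Finset.sum_mul, hwsum, one_mul] at h2
      exact le_trans h2 (le_trans (min_le_right _ _) (le_refl _))
    -- Chebyshev
    have hcheb := meas_ge_le_variance_div_sq (μ := (ℙ : Measure Ω)) hT2
      (c := ε/4) (by positivity)
    have hsubT : {ω | ε/2 ≤ |T ω|} ⊆ {ω | ε/4 ≤ |T ω - ∫ ω, T ω ∂ℙ|} := by
      intro ω hω
      simp only [Set.mem_setOf_eq] at *
      have := abs_sub_abs_le_abs_sub (T ω) (∫ ω, T ω ∂ℙ)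
      have h3 : |∫ ω, T ω ∂ℙ| ≤ ε/8 := hTmean
      linarith [abs_add_le (T ω - ∫ ω, T ω ∂ℙ) (∫ ω, T ω ∂ℙ),
        abs_sub_abs_le_abs_sub (T ω) (∫ ω, T ω ∂ℙ)]
    have hnum : variance T ℙ / (ε/4)^2 ≤ δ'/2 := by
      have hMnbig : A^2 * M₀ / Mn ≤ δ' * ε^2 / 64 := by
        have hB2 : 64 * A ^ 2 * M₀ ≤ ε ^ 2 * δ' * Mn := by
          have : B ≤ Mn := hMnB
          rw [hBdef] at this
          rw [div_le_iff₀ (by positivity)] at this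
          linarith
        rw [div_le_iff₀ hMnpos]
        linarith
      have hAδ₂ : A^2 * δ₂ = δ' * ε^2 / 256 := by
        rw [hδ₂def]
        field_simp
      rw [div_le_iff₀ (by positivity)]
      have hexp : δ'/2 * (ε/4)^2 = δ' * ε^2 / 32 := by ring
      rw [hexp]
      linarith [hvarbound, hε'sq, hAδ₂, hMnbig,
        mul_pos hδ'pos (pow_pos hε 2)]
    calc ℙ {ω | ε/2 ≤ |T ω|} ≤ ℙ {ω | ε/4 ≤ |T ω - ∫ ω, T ω ∂ℙ|} := measure_mono hsubT
      _ ≤ ENNReal.ofReal (variance T ℙ / (ε/4)^2) := hcheb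
      _ ≤ ENNReal.ofReal (δ'/2) := ENNReal.ofReal_le_ofReal hnum
  calc ℙ {ω | ε < |∑ k ∈ Finset.Icc 1 n, (m k / Mpart m n) * X k (m k) ω|}
      = ℙ {ω | ε < |∑ k ∈ K, w k * ξ k ω|} := rfl
    _ ≤ ℙ {ω | ε/2 ≤ |T ω|} + ℙ {ω | ε/2 ≤ |U ω|} := hbound
    _ ≤ ENNReal.ofReal (δ'/2) + ENNReal.ofReal (δ'/2) := add_le_add hTbound hUbound
    _ = ENNReal.ofReal δ' := by
        rw [← ENNReal.ofReal_add (by positivity) (by positivity)]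
        norm_num
    _ ≤ εδ := hδ'le
end
end

section
/- (Near-optimality of polynomial decay.) Let U_k be i.i.d. uniform random variables on (0,1) and define X_k(m) = 1 if U_k ∈ (0, 1/(2 log₂ m)), X_k(m) = −1 if U_k ∈ [1/(2 log₂ m), 1/log₂ m), and 0 otherwise (for m > 2). With masses m_k = 4^k, we have P(|X_k(m_k)| = 1) = 1/(2k), and hence almost surely |X_k(m_k)| = 1 for infinitely many k; consequently the weighted sums S_n = ∑_{k=1}^n (m_k/M_n) X_k(m_k) do not converge almost surely. -/
open MeasureTheory ProbabilityTheory Filter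
open scoped ENNReal Topology BigOperators

noncomputable section

/-- The masses `m_k = 4^k`. -/
def mseq (k : ℕ) : ℝ := 4 ^ k

/-- Independence of preimage events under independent random variables. -/
lemma iIndepSet_preimage_aux {Ω : Type*} [MeasureSpace Ω]
    (U : ℕ → Ω → ℝ) (hUm : ∀ k, Measurable (U k))
    (hUi : iIndepFun U ℙ)
    (B : ℕ → Set ℝ) (hB : ∀ k, MeasurableSet (B k)) :
    iIndepSet (fun k => (U k) ⁻¹' (B k)) ℙ := by
  rw [iIndepSet_iff_meas_biInter (fun k => (hUm k) (hB k))]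
  intro s
  exact hUi.meas_biInter (fun i _ => ⟨B i, hB i, rfl⟩)

/-- shift a frequently-atTop statement. -/
lemma frequently_shift_aux {p : ℕ → Prop} (h : ∃ᶠ k in atTop, p k) :
    ∃ᶠ n in atTop, p (n + 1) := by
  rw [frequently_atTop] at h ⊢
  intro N
  obtain ⟨k, hk, hp⟩ := h (N + 1)
  refine ⟨k - 1, by omega, ?_⟩
  have hk1 : k - 1 + 1 = k := by omega
  rw [hk1]; exact hp

/-- Near-optimality of the polynomial decay condition (S1): with only logarithmic
concentration, for masses `m_k = 4^k` one has `P(|X_k(m_k)| = 1) = 1/(2k)`, almost surely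
`|X_k(m_k)| = 1` infinitely often, and the incremental sums fail to converge a.s. -/
theorem near_optimality_S1
    {Ω : Type*} [MeasureSpace Ω] [IsProbabilityMeasure (ℙ : Measure Ω)]
    (U : ℕ → Ω → ℝ) (hUm : ∀ k, Measurable (U k))
    (hUd : ∀ k, Measure.map (U k) ℙ = volume.restrict (Set.Ioo (0:ℝ) 1))
    (hUi : iIndepFun U ℙ)
    (X : ℕ → ℝ → Ω → ℝ)
    (hX : ∀ k m ω, X k m ω =
      if U k ω ∈ Set.Ioo (0:ℝ) (1 / (2 * Real.logb 2 m)) then 1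
      else if U k ω ∈ Set.Ico (1 / (2 * Real.logb 2 m)) (1 / Real.logb 2 m) then -1
      else 0) :
    (∀ k : ℕ, 1 ≤ k →
      ℙ {ω : Ω | |X k (mseq k) ω| = 1} = ENNReal.ofReal (1 / (2 * k))) ∧
    (∀ᵐ ω ∂ℙ, ∃ᶠ k in atTop, |X k (mseq k) ω| = 1) ∧
    (∀ᵐ ω ∂ℙ, ¬ ∃ L : ℝ, Tendsto
      (fun n => ∑ k ∈ Finset.Icc 1 n, (mseq k / Mpart mseq n) * X k (mseq k) ω)
      atTop (𝓝 L)) := by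
  -- logb computation
  have hlogb : ∀ k : ℕ, Real.logb 2 (mseq k) = 2 * k := by
    intro k
    have h4 : (4:ℝ) = 2 ^ (2:ℕ) := by norm_num
    rw [mseq, h4, ← pow_mul, Real.logb_pow, Real.logb_self_eq_one (by norm_num)]
    push_cast; ring
  -- explicit form of X
  have hXval : ∀ k ω, X k (mseq k) ω =
      if U k ω ∈ Set.Ioo (0:ℝ) (1 / (4 * (k:ℝ))) then 1
      else if U k ω ∈ Set.Ico (1 / (4 * (k:ℝ))) (1 / (2 * k)) then -1 else 0 := by
    intro k ω
    rw [hX k (mseq k) ω, hlogb k]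
    have h1 : (2:ℝ) * (2 * k) = 4 * k := by ring
    rw [h1]
  -- |X| = 1 iff U ∈ Ioo 0 (1/(2k)), for k ≥ 1
  have habs : ∀ k : ℕ, 1 ≤ k → ∀ ω,
      (|X k (mseq k) ω| = 1 ↔ U k ω ∈ Set.Ioo (0:ℝ) (1 / (2 * (k:ℝ)))) := by
    intro k hk ω
    have hk' : (1:ℝ) ≤ (k:ℝ) := by exact_mod_cast hk
    have h4 : (0:ℝ) < 1 / (4 * (k:ℝ)) := by positivity
    have h42 : (1:ℝ) / (4 * (k:ℝ)) ≤ 1 / (2 * (k:ℝ)) := by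
      apply one_div_le_one_div_of_le (by linarith) (by linarith)
    rw [hXval]
    split_ifs with h1 h2
    · exact iff_of_true (by norm_num) ⟨h1.1, lt_of_lt_of_le h1.2 h42⟩
    · exact iff_of_true (by norm_num) ⟨lt_of_lt_of_le h4 h2.1, h2.2⟩
    · simp only [abs_zero, Set.mem_Ioo]
      constructor
      · intro h; norm_num at h
      · rintro ⟨hu0, hu2⟩
        by_cases hlt : U k ω < 1 / (4 * (k:ℝ))
        · exact absurd ⟨hu0, hlt⟩ h1
        · exact absurd ⟨not_lt.1 hlt, hu2⟩ h2
  -- X = 0 when U ≥ 1/(2k), for k ≥ 1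
  have hzero : ∀ k : ℕ, 1 ≤ k → ∀ ω,
      1 / (2 * (k:ℝ)) ≤ U k ω → X k (mseq k) ω = 0 := by
    intro k hk ω hU
    have hk' : (1:ℝ) ≤ (k:ℝ) := by exact_mod_cast hk
    have h42 : (1:ℝ) / (4 * (k:ℝ)) ≤ 1 / (2 * (k:ℝ)) := by
      apply one_div_le_one_div_of_le (by linarith) (by linarith)
    rw [hXval]
    rw [if_neg, if_neg]
    · rintro ⟨-, hlt⟩; exact absurd hU (not_le.2 hlt)
    · rintro ⟨-, hlt⟩; exact absurd hU (not_le.2 (lt_of_lt_of_le hlt h42))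
  -- measure of preimages
  have hmap : ∀ k (B : Set ℝ), MeasurableSet B →
      ℙ ((U k) ⁻¹' B) = volume (B ∩ Set.Ioo (0:ℝ) 1) := by
    intro k B hB
    rw [← Measure.map_apply (hUm k) hB, hUd k, Measure.restrict_apply hB]
  -- the key events
  set s : ℕ → Set Ω := fun k => (U k) ⁻¹' (Set.Ioo (0:ℝ) (1 / (2 * (k:ℝ)))) with hs_def
  set t : ℕ → Set Ω := fun k => (U k) ⁻¹' (Set.Ici ((1:ℝ) / (2 * (k:ℝ)))) with ht_def
  have hsm : ∀ k, MeasurableSet (s k) := fun k => (hUm k) measurableSet_Ioo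
  have htm : ∀ k, MeasurableSet (t k) := fun k => (hUm k) measurableSet_Ici
  -- probability of s k
  have hPs : ∀ k : ℕ, ℙ (s k) = ENNReal.ofReal (1 / (2 * (k:ℝ))) := by
    intro k
    rcases Nat.eq_zero_or_pos k with hk0 | hk1
    · subst hk0
      simp only [hs_def, Nat.cast_zero, mul_zero, div_zero, Set.Ioo_self, Set.preimage_empty,
        measure_empty, ENNReal.ofReal_zero]
    · have hk' : (1:ℝ) ≤ (k:ℝ) := by exact_mod_cast hk1
      have hc1 : (1:ℝ) / (2 * (k:ℝ)) ≤ 1 := by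
        rw [div_le_one (by linarith)]; linarith
      rw [hs_def]
      simp only
      rw [hmap k _ measurableSet_Ioo,
        Set.inter_eq_left.2 (Set.Ioo_subset_Ioo le_rfl hc1), Real.volume_Ioo, sub_zero]
  -- statement 1
  have hP1 : ∀ k : ℕ, 1 ≤ k →
      ℙ {ω : Ω | |X k (mseq k) ω| = 1} = ENNReal.ofReal (1 / (2 * k)) := by
    intro k hk
    have hset : {ω : Ω | |X k (mseq k) ω| = 1} = s k := by
      ext ω; exact habs k hk ω
    rw [hset, hPs]
  -- independence
  have hsInd : iIndepSet s ℙ :=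
    iIndepSet_preimage_aux U hUm hUi _ (fun k => measurableSet_Ioo)
  have htInd : iIndepSet t ℙ :=
    iIndepSet_preimage_aux U hUm hUi _ (fun k => measurableSet_Ici)
  -- divergence of ∑ 1/(2k)
  have hsSum : (∑' k, ℙ (s k)) = ∞ := by
    by_contra hne
    have hsum : Summable (fun k => (ℙ (s k)).toReal) := ENNReal.summable_toReal hne
    have heq : (fun k : ℕ => (ℙ (s k)).toReal) = fun k : ℕ => 1 / (2 * (k:ℝ)) := by
      funext k
      rw [hPs k, ENNReal.toReal_ofReal (by positivity)]
    rw [heq] at hsum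
    have hsum2 := hsum.mul_left 2
    have heq2 : (fun k : ℕ => 2 * (1 / (2 * (k:ℝ)))) = fun k : ℕ => 1 / (k:ℝ) := by
      funext k
      rcases Nat.eq_zero_or_pos k with hk0 | hk1
      · subst hk0; norm_num
      · have hk' : (0:ℝ) < k := by exact_mod_cast hk1
        field_simp
    rw [heq2] at hsum2
    exact Real.not_summable_one_div_natCast hsum2
  -- divergence of ∑ P(t k)
  have htSum : (∑' k, ℙ (t k)) = ∞ := by
    have hbound : ∀ k : ℕ, ENNReal.ofReal (1/2 : ℝ) ≤ ℙ (t k) := by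
      intro k
      have hle : (1:ℝ) / (2 * (k:ℝ)) ≤ 1 / 2 := by
        rcases Nat.eq_zero_or_pos k with hk0 | hk1
        · subst hk0; norm_num
        · have hk' : (1:ℝ) ≤ (k:ℝ) := by exact_mod_cast hk1
          apply one_div_le_one_div_of_le (by norm_num) (by linarith)
      have hsub : Set.Ico (1/2 : ℝ) 1 ⊆ Set.Ici ((1:ℝ) / (2 * (k:ℝ))) := by
        intro x hx; exact le_trans hle hx.1
      have hIco : ℙ ((U k) ⁻¹' (Set.Ico (1/2 : ℝ) 1)) = ENNReal.ofReal (1/2 : ℝ) := by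
        rw [hmap k _ measurableSet_Ico]
        have : Set.Ico (1/2 : ℝ) 1 ∩ Set.Ioo (0:ℝ) 1 = Set.Ico (1/2 : ℝ) 1 := by
          apply Set.inter_eq_left.2
          intro x hx; exact ⟨by linarith [hx.1], hx.2⟩
        rw [this, Real.volume_Ico]
        norm_num
      rw [← hIco]
      exact measure_mono (Set.preimage_mono hsub)
    refine top_le_iff.1 ?_
    calc (⊤ : ℝ≥0∞) = ∑' _ : ℕ, ENNReal.ofReal (1/2 : ℝ) :=
          (ENNReal.tsum_const_eq_top_of_ne_zero (by norm_num)).symm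
      _ ≤ ∑' k, ℙ (t k) := ENNReal.tsum_le_tsum hbound
  -- a.e. membership in limsup
  have hae : ∀ (u : ℕ → Set Ω), (∀ k, MeasurableSet (u k)) → iIndepSet u ℙ →
      (∑' k, ℙ (u k)) = ∞ → ∀ᵐ ω ∂ℙ, ω ∈ limsup u atTop := by
    intro u hum huInd huSum
    have h1 : ℙ (limsup u atTop) = 1 := measure_limsup_eq_one hum huInd huSum
    have h0 : ℙ (limsup u atTop)ᶜ = 0 := by
      rw [measure_compl (MeasurableSet.measurableSet_limsup hum) (measure_ne_top _ _), h1, measure_univ,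
        tsub_self]
    exact mem_ae_iff.2 h0
  have haeS : ∀ᵐ ω ∂ℙ, ∃ᶠ k in atTop, |X k (mseq k) ω| = 1 := by
    filter_upwards [hae s hsm hsInd hsSum] with ω hω
    rw [mem_limsup_iff_frequently_mem] at hω
    refine (hω.and_eventually (eventually_ge_atTop 1)).mono ?_
    rintro k ⟨hks, hk1⟩
    exact (habs k hk1 ω).2 hks
  have haeT : ∀ᵐ ω ∂ℙ, ∃ᶠ k in atTop, (1 ≤ k ∧ X k (mseq k) ω = 0) := by
    filter_upwards [hae t htm htInd htSum] with ω hω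
    rw [mem_limsup_iff_frequently_mem] at hω
    refine (hω.and_eventually (eventually_ge_atTop 1)).mono ?_
    rintro k ⟨hkt, hk1⟩
    exact ⟨hk1, hzero k hk1 ω hkt⟩
  refine ⟨hP1, haeS, ?_⟩
  -- Part 3: non-convergence
  -- closed form for Mpart
  have hM : ∀ n : ℕ, Mpart mseq n = ((4:ℝ) ^ (n+1) - 4) / 3 := by
    intro n
    induction n with
    | zero => rw [Mpart, Finset.Icc_eq_empty (by omega)]; norm_num
    | succ n ih =>
      rw [Mpart, Finset.sum_Icc_succ_top (by omega : 1 ≤ n + 1), ← Mpart, ih, mseq]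
      ring
  have hmne : ∀ n : ℕ, mseq n ≠ 0 := by
    intro n; rw [mseq]; positivity
  -- limits of the coefficient sequences
  have hg : Tendsto (fun n : ℕ => ((1:ℝ)/4) ^ (n+1)) atTop (𝓝 0) :=
    (tendsto_pow_atTop_nhds_zero_of_lt_one (by norm_num) (by norm_num)).comp
      (tendsto_add_atTop_nat 1)
  have ha : Tendsto (fun n : ℕ => Mpart mseq (n+1) / mseq (n+1)) atTop (𝓝 (4/3 : ℝ)) := by
    have heq : (fun n : ℕ => Mpart mseq (n+1) / mseq (n+1)) =
        fun n : ℕ => 4/3 - (4/3) * ((1:ℝ)/4) ^ (n+1) := by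
      funext n
      rw [hM, mseq]
      have h4 : ((4:ℝ)) ^ (n+1) ≠ 0 := by positivity
      rw [div_pow, one_pow]
      field_simp
      try ring
    rw [heq]
    have h' : Tendsto (fun n : ℕ => 4/3 - (4/3) * ((1:ℝ)/4) ^ (n+1)) atTop
        (𝓝 (4/3 - (4/3) * 0)) := tendsto_const_nhds.sub (hg.const_mul _)
    simpa using h'
  have hb : Tendsto (fun n : ℕ => Mpart mseq n / mseq (n+1)) atTop (𝓝 (1/3 : ℝ)) := by
    have heq : (fun n : ℕ => Mpart mseq n / mseq (n+1)) =
        fun n : ℕ => 1/3 - (4/3) * ((1:ℝ)/4) ^ (n+1) := by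
      funext n
      rw [hM, mseq]
      have h4 : ((4:ℝ)) ^ (n+1) ≠ 0 := by positivity
      rw [div_pow, one_pow]
      field_simp
      try ring
    rw [heq]
    have h' : Tendsto (fun n : ℕ => 1/3 - (4/3) * ((1:ℝ)/4) ^ (n+1)) atTop
        (𝓝 (1/3 - (4/3) * 0)) := tendsto_const_nhds.sub (hg.const_mul _)
    simpa using h'
  filter_upwards [haeS, haeT] with ω hfreq1 hfreq0
  rintro ⟨L, hL⟩
  set Y : ℕ → ℝ := fun k => X k (mseq k) ω with hY_def
  set Sf : ℕ → ℝ := fun n => ∑ k ∈ Finset.Icc 1 n, (mseq k / Mpart mseq n) * Y k with hSf_def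
  -- hL is about Sf
  have hLS : Tendsto Sf atTop (𝓝 L) := hL
  -- S n * M n = T n
  have hST : ∀ n : ℕ, Sf n * Mpart mseq n = ∑ k ∈ Finset.Icc 1 n, mseq k * Y k := by
    intro n
    rcases Nat.eq_zero_or_pos n with hn0 | hn1
    · subst hn0
      rw [hSf_def]
      simp [Finset.Icc_eq_empty (by omega : ¬ (1:ℕ) ≤ 0)]
    · have hMpos : (0:ℝ) < Mpart mseq n := by
        rw [hM]
        have h16 : (4:ℝ)^2 ≤ (4:ℝ) ^ (n+1) :=
          pow_le_pow_right₀ (by norm_num) (by omega)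
        norm_num at h16 ⊢
        linarith
      rw [hSf_def]
      simp only
      rw [Finset.sum_mul]
      apply Finset.sum_congr rfl
      intro k _
      field_simp
  -- the increment identity
  have hinc : ∀ n : ℕ, Y (n+1) =
      Sf (n+1) * (Mpart mseq (n+1) / mseq (n+1)) - Sf n * (Mpart mseq n / mseq (n+1)) := by
    intro n
    have hstep : ∑ k ∈ Finset.Icc 1 (n+1), mseq k * Y k
        = (∑ k ∈ Finset.Icc 1 n, mseq k * Y k) + mseq (n+1) * Y (n+1) :=
      Finset.sum_Icc_succ_top (by omega : 1 ≤ n + 1) _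
    have hkey : Sf (n+1) * Mpart mseq (n+1) - Sf n * Mpart mseq n = mseq (n+1) * Y (n+1) := by
      rw [hST, hST, hstep]; ring
    have hm := hmne (n+1)
    calc Y (n+1) = (mseq (n+1) * Y (n+1)) / mseq (n+1) := (mul_div_cancel_left₀ _ hm).symm
      _ = (Sf (n+1) * Mpart mseq (n+1) - Sf n * Mpart mseq n) / mseq (n+1) := by rw [hkey]
      _ = Sf (n+1) * (Mpart mseq (n+1) / mseq (n+1))
            - Sf n * (Mpart mseq n / mseq (n+1)) := by ring
  -- Y (n+1) tends to L
  have hYlim : Tendsto (fun n : ℕ => Y (n+1)) atTop (𝓝 L) := by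
    have h' : Tendsto (fun n : ℕ => Sf (n+1) * (Mpart mseq (n+1) / mseq (n+1))
        - Sf n * (Mpart mseq n / mseq (n+1))) atTop (𝓝 (L * (4/3) - L * (1/3))) :=
      ((hLS.comp (tendsto_add_atTop_nat 1)).mul ha).sub (hLS.mul hb)
    have heqL : L * (4/3) - L * (1/3) = L := by ring
    rw [heqL] at h'
    have heqf : (fun n : ℕ => Y (n+1)) = fun n : ℕ =>
        Sf (n+1) * (Mpart mseq (n+1) / mseq (n+1)) - Sf n * (Mpart mseq n / mseq (n+1)) := by
      funext n; exact hinc n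
    rw [heqf]
    exact h'
  -- derive contradiction
  obtain ⟨N, hN⟩ := Metric.tendsto_atTop.1 hYlim (1/2) (by norm_num)
  have hfreq1' : ∃ᶠ n in atTop, |Y (n+1)| = 1 := frequently_shift_aux hfreq1
  have hfreq0' : ∃ᶠ n in atTop, (1 ≤ n + 1 ∧ Y (n+1) = 0) := frequently_shift_aux hfreq0
  obtain ⟨n₁, hn₁, habs1⟩ := frequently_atTop.1 hfreq1' N
  obtain ⟨n₀, hn₀, -, hzero0⟩ := frequently_atTop.1 hfreq0' N
  have hd1 := hN n₁ hn₁
  have hd0 := hN n₀ hn₀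
  rw [Real.dist_eq] at hd1 hd0
  rw [hzero0] at hd0
  have hL2 : |L| < 1/2 := by
    rw [zero_sub, abs_neg] at hd0; exact hd0
  have h1 : (1:ℝ) - |L| ≤ |Y (n₁+1) - L| := by
    calc (1:ℝ) - |L| = |Y (n₁+1)| - |L| := by rw [habs1]
      _ ≤ |Y (n₁+1) - L| := abs_sub_abs_le_abs_sub _ _
  linarith
end
end

section
/- (L¹ stability of frequencies implies regularity.) Assume the limit A := lim_{t→∞} ℓ_t/t exists in [0,∞]. If F_t → F_* in L¹ (i.e. F_t → F_* weakly and ∫ m dF_t → ∫ m dF_* < ∞) with F_* ≠ δ_0, then A ∈ (0,∞) and μ_t converges weakly to the measure μ_* determined by ⟨μ_*, f⟩ = A ∫ m f(m) dF_*(m) for all continuous bounded f on [0,∞]. -/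
open MeasureTheory ProbabilityTheory Filter
open scoped ENNReal Topology BigOperators

noncomputable section

/-- `ℓ_t = inf {ℓ : M_ℓ ≥ t}`, the index of the increment containing time `t`. -/
def ell (m : ℕ → ℝ) (t : ℝ) : ℕ := sInf {l : ℕ | t ≤ Mpart m l}

/-- `t̄ = t - M_{ℓ_t - 1}`, the elapsed part of the current increment. -/
def tbar (m : ℕ → ℝ) (t : ℝ) : ℝ := t - Mpart m (ell m t - 1)

/-- The empirical mass measure `μ_t = (t̄/t) δ_{t̄} + ∑_{k<ℓ_t} (m_k/t) δ_{m_k}`,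
as a measure on `[0,∞]` (modelled by `ℝ≥0∞`). -/
def empMass (m : ℕ → ℝ) (t : ℝ) : Measure ℝ≥0∞ :=
  ENNReal.ofReal (tbar m t / t) • Measure.dirac (ENNReal.ofReal (tbar m t)) +
  ∑ k ∈ Finset.Icc 1 (ell m t - 1),
    ENNReal.ofReal (m k / t) • Measure.dirac (ENNReal.ofReal (m k))

/-- The empirical mass frequency `F_t = (1/ℓ_t) (δ_{t̄} + ∑_{k<ℓ_t} δ_{m_k})`,
as a measure on `[0,∞]` (modelled by `ℝ≥0∞`). -/
def empFreq (m : ℕ → ℝ) (t : ℝ) : Measure ℝ≥0∞ :=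
  ((ell m t : ℝ≥0∞))⁻¹ •
    (Measure.dirac (ENNReal.ofReal (tbar m t)) +
     ∑ k ∈ Finset.Icc 1 (ell m t - 1), Measure.dirac (ENNReal.ofReal (m k)))

/- ### Auxiliary lemmas -/

lemma Mpart_zero (m : ℕ → ℝ) : Mpart m 0 = 0 := by simp [Mpart]

lemma ell_mem (m : ℕ → ℝ) (hdiv : Tendsto (Mpart m) atTop atTop) (t : ℝ) :
    t ≤ Mpart m (ell m t) := by
  have hne : {l : ℕ | t ≤ Mpart m l}.Nonempty :=
    (hdiv.eventually (eventually_ge_atTop t)).exists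
  exact Nat.sInf_mem hne

lemma ell_pos (m : ℕ → ℝ) (hdiv : Tendsto (Mpart m) atTop atTop) {t : ℝ} (ht : 0 < t) :
    1 ≤ ell m t := by
  by_contra h
  push_neg at h
  have h0 : ell m t = 0 := by omega
  have h1 := ell_mem m hdiv t
  rw [h0, Mpart_zero] at h1
  linarith

lemma Mpart_pred_lt (m : ℕ → ℝ) (hdiv : Tendsto (Mpart m) atTop atTop) {t : ℝ} (ht : 0 < t) :
    Mpart m (ell m t - 1) < t := by
  have h1 : ell m t - 1 < ell m t := Nat.sub_lt (ell_pos m hdiv ht) one_pos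
  have := Nat.notMem_of_lt_sInf h1
  simpa [Set.mem_setOf_eq, not_le] using this

lemma tbar_pos (m : ℕ → ℝ) (hdiv : Tendsto (Mpart m) atTop atTop) {t : ℝ} (ht : 0 < t) :
    0 < tbar m t := by
  have := Mpart_pred_lt m hdiv ht
  simp only [tbar]; linarith

lemma tbar_add_sum (m : ℕ → ℝ) (t : ℝ) :
    tbar m t + ∑ k ∈ Finset.Icc 1 (ell m t - 1), m k = t := by
  simp [tbar, Mpart]

/-- Every measurable function is integrable with respect to a Dirac measure. -/
lemma integrable_dirac' {f : ℝ≥0∞ → ℝ} (hf : Measurable f) (a : ℝ≥0∞) :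
    Integrable f (Measure.dirac a) := by
  refine ⟨hf.aestronglyMeasurable, ?_⟩
  simp [HasFiniteIntegral, lintegral_dirac]

lemma integrable_smul_dirac {f : ℝ≥0∞ → ℝ} (hf : Measurable f) (a : ℝ≥0∞) (c : ℝ≥0∞)
    (hc : c ≠ ⊤) : Integrable f (c • Measure.dirac a) := by
  refine ⟨hf.aestronglyMeasurable, ?_⟩
  simp only [HasFiniteIntegral, lintegral_smul_measure, lintegral_dirac]
  exact ENNReal.mul_lt_top hc.lt_top (by simp)

lemma integral_empFreq {f : ℝ≥0∞ → ℝ} (hf : Measurable f) (m : ℕ → ℝ) (t : ℝ) :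
    ∫ x, f x ∂(empFreq m t) = (ell m t : ℝ)⁻¹ *
      (f (ENNReal.ofReal (tbar m t)) +
       ∑ k ∈ Finset.Icc 1 (ell m t - 1), f (ENNReal.ofReal (m k))) := by
  have hint : ∀ i ∈ Finset.Icc 1 (ell m t - 1),
      Integrable f (Measure.dirac (ENNReal.ofReal (m i))) := fun i _ => integrable_dirac' hf _
  have hintsum : Integrable f
      (∑ k ∈ Finset.Icc 1 (ell m t - 1), Measure.dirac (ENNReal.ofReal (m k))) := by
    refine ⟨hf.aestronglyMeasurable, ?_⟩
    simp only [HasFiniteIntegral, lintegral_finset_sum_measure, lintegral_dirac]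
    exact ENNReal.sum_lt_top.mpr fun i _ => by simp
  rw [empFreq, integral_smul_measure,
    integral_add_measure (integrable_dirac' hf _) hintsum, integral_dirac,
    integral_finset_sum_measure hint]
  simp [integral_dirac, ENNReal.toReal_inv, smul_eq_mul]

lemma integral_empMass {f : ℝ≥0∞ → ℝ} (hf : Measurable f) (m : ℕ → ℝ) (hm : ∀ k, 0 < m k)
    (hdiv : Tendsto (Mpart m) atTop atTop) {t : ℝ} (ht : 0 < t) :
    ∫ x, f x ∂(empMass m t) = (tbar m t / t) * f (ENNReal.ofReal (tbar m t)) +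
      ∑ k ∈ Finset.Icc 1 (ell m t - 1), (m k / t) * f (ENNReal.ofReal (m k)) := by
  have h1 : Integrable f
      (ENNReal.ofReal (tbar m t / t) • Measure.dirac (ENNReal.ofReal (tbar m t))) :=
    integrable_smul_dirac hf _ _ ENNReal.ofReal_ne_top
  have h2 : Integrable f (∑ k ∈ Finset.Icc 1 (ell m t - 1),
      ENNReal.ofReal (m k / t) • Measure.dirac (ENNReal.ofReal (m k))) := by
    refine ⟨hf.aestronglyMeasurable, ?_⟩
    simp only [HasFiniteIntegral, lintegral_finset_sum_measure, lintegral_smul_measure,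
      lintegral_dirac]
    exact ENNReal.sum_lt_top.mpr fun i _ =>
      ENNReal.mul_lt_top ENNReal.ofReal_lt_top (by simp)
  rw [empMass, integral_add_measure h1 h2,
    integral_finset_sum_measure (fun i _ => integrable_smul_dirac hf _ _ ENNReal.ofReal_ne_top)]
  have htb : 0 ≤ tbar m t / t := div_nonneg (tbar_pos m hdiv ht).le ht.le
  simp only [integral_smul_measure, integral_dirac, smul_eq_mul]
  rw [ENNReal.toReal_ofReal htb]
  congr 1
  refine Finset.sum_congr rfl fun k _ => ?_
  rw [ENNReal.toReal_ofReal (div_nonneg (hm k).le ht.le)]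

lemma lintegral_empFreq (m : ℕ → ℝ) (hm : ∀ k, 0 < m k)
    (hdiv : Tendsto (Mpart m) atTop atTop) {t : ℝ} (ht : 0 < t) :
    ∫⁻ x, x ∂(empFreq m t) = ENNReal.ofReal t / (ell m t : ℝ≥0∞) := by
  rw [empFreq, lintegral_smul_measure, lintegral_add_measure, lintegral_finset_sum_measure]
  simp only [lintegral_dirac]
  have hsum : ENNReal.ofReal (tbar m t) +
      ∑ k ∈ Finset.Icc 1 (ell m t - 1), ENNReal.ofReal (m k) = ENNReal.ofReal t := by
    rw [← ENNReal.ofReal_sum_of_nonneg (fun k _ => (hm k).le),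
      ← ENNReal.ofReal_add (tbar_pos m hdiv ht).le
        (Finset.sum_nonneg fun k _ => (hm k).le)]
    rw [tbar_add_sum]
  rw [hsum, ENNReal.div_eq_inv_mul, smul_eq_mul]

lemma empFreq_prob (m : ℕ → ℝ) (hdiv : Tendsto (Mpart m) atTop atTop) {t : ℝ} (ht : 0 < t) :
    IsProbabilityMeasure (empFreq m t) := by
  constructor
  rw [empFreq]
  have hl := ell_pos m hdiv ht
  rw [Measure.smul_apply, Measure.add_apply]
  simp only [Measure.dirac_apply_of_mem (Set.mem_univ _), Measure.coe_finset_sum,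
    Finset.sum_apply, smul_eq_mul]
  rw [Finset.sum_const, Nat.card_Icc, nsmul_eq_mul, mul_one]
  have heq : (1 : ℝ≥0∞) + (ell m t - 1 + 1 - 1 : ℕ) = (ell m t : ℝ≥0∞) := by
    have h2 : ell m t - 1 + 1 - 1 = ell m t - 1 := by omega
    rw [h2, ← Nat.cast_one, ← Nat.cast_add, Nat.add_sub_cancel' hl]
  rw [heq, ENNReal.inv_mul_cancel (Nat.cast_ne_zero.mpr (by omega)) (by simp)]

/-- Truncation estimate. -/
lemma trunc_bound (ν : Measure ℝ≥0∞) [IsFiniteMeasure ν] (hν : ∫⁻ x, x ∂ν ≠ ⊤)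
    {f : ℝ≥0∞ → ℝ} (hf : Measurable f) {C : ℝ} (hC : ∀ x, |f x| ≤ C) (N : ℝ≥0∞) (hN : N ≠ ⊤) :
    |∫ x, x.toReal * f x ∂ν - ∫ x, (x ⊓ N).toReal * f x ∂ν| ≤
      C * (∫⁻ x, x - x ⊓ N ∂ν).toReal := by
  have hC0 : 0 ≤ C := le_trans (abs_nonneg _) (hC 0)
  have hae : ∀ᵐ x ∂ν, x < ⊤ := ae_lt_top measurable_id hν
  have hmin : Measurable fun x : ℝ≥0∞ => x ⊓ N := measurable_id.min measurable_const
  have hmsub : Measurable fun x : ℝ≥0∞ => x - x ⊓ N := measurable_id.sub hmin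
  have hint_toReal : Integrable (fun x : ℝ≥0∞ => x.toReal) ν := by
    refine ⟨ENNReal.measurable_toReal.aestronglyMeasurable, ?_⟩
    rw [HasFiniteIntegral]
    calc ∫⁻ x, ‖x.toReal‖₊ ∂ν = ∫⁻ x, ENNReal.ofReal x.toReal ∂ν := by
          exact lintegral_congr fun x => Real.enorm_eq_ofReal ENNReal.toReal_nonneg
      _ ≤ ∫⁻ x, x ∂ν := lintegral_mono fun x => ENNReal.ofReal_toReal_le
      _ < ⊤ := hν.lt_top
  have i1 : Integrable (fun x : ℝ≥0∞ => x.toReal * f x) ν := by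
    refine (hint_toReal.const_mul C).mono'
      ((ENNReal.measurable_toReal.mul hf).aestronglyMeasurable) (ae_of_all _ fun x => ?_)
    rw [Real.norm_eq_abs, abs_mul, abs_of_nonneg ENNReal.toReal_nonneg, mul_comm C]
    exact mul_le_mul_of_nonneg_left (hC x) ENNReal.toReal_nonneg
  have i2 : Integrable (fun x : ℝ≥0∞ => (x ⊓ N).toReal * f x) ν := by
    refine (integrable_const (N.toReal * C)).mono'
      ((ENNReal.measurable_toReal.comp hmin).mul hf).aestronglyMeasurable
      (ae_of_all _ fun x => ?_)
    rw [Real.norm_eq_abs, abs_mul, abs_of_nonneg ENNReal.toReal_nonneg]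
    exact mul_le_mul (ENNReal.toReal_mono hN inf_le_right) (hC x) (abs_nonneg _)
      ENNReal.toReal_nonneg
  have isub : Integrable (fun x : ℝ≥0∞ => (x - x ⊓ N).toReal) ν := by
    refine hint_toReal.mono' (ENNReal.measurable_toReal.comp hmsub).aestronglyMeasurable
      (hae.mono fun x hx => ?_)
    rw [Real.norm_eq_abs, abs_of_nonneg ENNReal.toReal_nonneg]
    exact ENNReal.toReal_mono hx.ne tsub_le_self
  rw [← integral_sub i1 i2]
  calc |∫ x, (x.toReal * f x - (x ⊓ N).toReal * f x) ∂ν|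
      ≤ ∫ x, |x.toReal * f x - (x ⊓ N).toReal * f x| ∂ν := by
        simpa [Real.norm_eq_abs] using
          norm_integral_le_integral_norm (μ := ν)
            (fun x : ℝ≥0∞ => x.toReal * f x - (x ⊓ N).toReal * f x)
    _ ≤ ∫ x, (x - x ⊓ N).toReal * C ∂ν := by
        refine integral_mono_of_nonneg (ae_of_all _ fun x => abs_nonneg _)
          (isub.mul_const C) (hae.mono fun x hx => ?_)
        have h1 : (x ⊓ N).toReal ≤ x.toReal := ENNReal.toReal_mono hx.ne inf_le_left
        have h2 : (x - x ⊓ N).toReal = x.toReal - (x ⊓ N).toReal :=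
          ENNReal.toReal_sub_of_le inf_le_left hx.ne
        show |x.toReal * f x - (x ⊓ N).toReal * f x| ≤ (x - x ⊓ N).toReal * C
        rw [← sub_mul, abs_mul, abs_of_nonneg (by linarith), h2]
        exact mul_le_mul_of_nonneg_left (hC x) (by linarith)
    _ = C * (∫⁻ x, x - x ⊓ N ∂ν).toReal := by
        rw [integral_mul_const, mul_comm]
        congr 1
        refine integral_toReal hmsub.aemeasurable (hae.mono fun x hx => ?_)
        exact lt_of_le_of_lt tsub_le_self hx

/-- L¹ stability of the empirical frequencies implies regularity: if `ℓ_t/t → A`,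
`F_t → F_*` weakly with convergence of first moments (`L¹`), and `F_* ≠ δ_0`,
then `A ∈ (0,∞)` and `μ_t` converges weakly to `μ_*` with
`⟨μ_*, f⟩ = A ∫ m f(m) dF_*(m)`. -/
theorem L1_frequency_implies_regular (m : ℕ → ℝ) (hm : ∀ k, 0 < m k)
    (hdiv : Tendsto (Mpart m) atTop atTop)
    (A : ℝ≥0∞)
    (hA : Tendsto (fun t : ℝ => ENNReal.ofReal ((ell m t : ℝ) / t)) atTop (𝓝 A))
    (Fstar : Measure ℝ≥0∞) [IsProbabilityMeasure Fstar]
    (hweak : ∀ f : ℝ≥0∞ → ℝ, Continuous f →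
      Tendsto (fun t : ℝ => ∫ x, f x ∂(empFreq m t)) atTop (𝓝 (∫ x, f x ∂Fstar)))
    (hL1 : Tendsto (fun t : ℝ => ∫⁻ x, x ∂(empFreq m t)) atTop (𝓝 (∫⁻ x, x ∂Fstar)))
    (hfin : ∫⁻ x, x ∂Fstar < ⊤)
    (hne : Fstar ≠ Measure.dirac 0) :
    A ≠ 0 ∧ A ≠ ⊤ ∧
    ∀ f : ℝ≥0∞ → ℝ, Continuous f →
      Tendsto (fun t : ℝ => ∫ x, f x ∂(empMass m t)) atTop
        (𝓝 (A.toReal * ∫ x, x.toReal * f x ∂Fstar)) := by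
  have hIne : (∫⁻ x, x ∂Fstar) ≠ ⊤ := hfin.ne
  -- `Fstar ≠ δ₀` implies positive first moment
  have hI0 : (∫⁻ x, x ∂Fstar) ≠ 0 := by
    intro h0
    apply hne
    have hzero : Fstar {x : ℝ≥0∞ | x ≠ 0} = 0 := by
      have h := (lintegral_eq_zero_iff measurable_id).mp h0
      simpa [Filter.EventuallyEq, ae_iff] using h
    ext s hs
    by_cases h0s : (0 : ℝ≥0∞) ∈ s
    · have hsc : Fstar sᶜ = 0 := by
        refine measure_mono_null ?_ hzero
        intro x hx
        simp only [Set.mem_setOf_eq]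
        intro hx0
        exact hx (by rw [hx0]; exact h0s)
      have hu := measure_add_measure_compl (μ := Fstar) hs
      rw [hsc, add_zero, measure_univ] at hu
      rw [hu, Measure.dirac_apply' _ hs, Set.indicator_of_mem h0s, Pi.one_apply]
    · have hs0 : Fstar s = 0 := by
        refine measure_mono_null ?_ hzero
        intro x hx
        simp only [Set.mem_setOf_eq]
        intro hx0
        exact h0s (by rw [← hx0]; exact hx)
      rw [hs0, Measure.dirac_apply' _ hs, Set.indicator_of_notMem h0s]
  -- identification of `A` as the inverse of the first moment
  have hKt : Tendsto (fun t : ℝ => ENNReal.ofReal t / (ell m t : ℝ≥0∞)) atTop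
      (𝓝 (∫⁻ x, x ∂Fstar)) := by
    refine hL1.congr' ?_
    filter_upwards [eventually_gt_atTop 0] with t ht
    exact lintegral_empFreq m hm hdiv ht
  have hinv : Tendsto (fun t : ℝ => ((ell m t : ℝ≥0∞)) / ENNReal.ofReal t) atTop
      (𝓝 (∫⁻ x, x ∂Fstar)⁻¹) := by
    have h1 : Tendsto (fun t : ℝ => (ENNReal.ofReal t / (ell m t : ℝ≥0∞))⁻¹) atTop
        (𝓝 (∫⁻ x, x ∂Fstar)⁻¹) := ENNReal.tendsto_inv_iff.mpr hKt
    refine Filter.Tendsto.congr' ?_ h1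
    filter_upwards [eventually_gt_atTop 0] with t ht
    have hl := ell_pos m hdiv ht
    exact ENNReal.inv_div (Or.inl (ENNReal.natCast_ne_top _))
      (Or.inl (Nat.cast_ne_zero.mpr (by omega)))
  have hAeq : A = (∫⁻ x, x ∂Fstar)⁻¹ := by
    refine tendsto_nhds_unique hA ?_
    refine Filter.Tendsto.congr' ?_ hinv
    filter_upwards [eventually_gt_atTop 0] with t ht
    rw [ENNReal.ofReal_div_of_pos ht, ENNReal.ofReal_natCast]
  have hAne0 : A ≠ 0 := by rw [hAeq]; exact ENNReal.inv_ne_zero.mpr hIne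
  have hAnetop : A ≠ ⊤ := by rw [hAeq]; exact ENNReal.inv_ne_top.mpr hI0
  refine ⟨hAne0, hAnetop, ?_⟩
  intro f hf
  -- a uniform bound for `f`
  obtain ⟨x₀, -, hx₀⟩ := isCompact_univ.exists_isMaxOn ⟨0, trivial⟩
    (continuous_abs.comp hf).continuousOn
  set C := |f x₀| with hCdef
  have hC : ∀ x, |f x| ≤ C := fun x => hx₀ (Set.mem_univ x)
  have hC0 : 0 ≤ C := le_trans (abs_nonneg _) (hC 0)
  -- truncation setup
  have hJle : ∀ N : ℕ, ∫⁻ x, x ⊓ (N : ℝ≥0∞) ∂Fstar ≤ ∫⁻ x, x ∂Fstar :=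
    fun N => lintegral_mono fun x => inf_le_left
  have hJne : ∀ N : ℕ, (∫⁻ x, x ⊓ (N : ℝ≥0∞) ∂Fstar) ≠ ⊤ :=
    fun N => ((hJle N).trans_lt hfin).ne
  have hJmono : Monotone fun N : ℕ => ∫⁻ x, x ⊓ (N : ℝ≥0∞) ∂Fstar :=
    fun a b hab => lintegral_mono fun x => inf_le_inf_left _ (Nat.cast_le.mpr hab)
  have hJsup : (⨆ N : ℕ, ∫⁻ x, x ⊓ (N : ℝ≥0∞) ∂Fstar) = ∫⁻ x, x ∂Fstar := by
    have hmeas : ∀ n : ℕ, Measurable fun x : ℝ≥0∞ => x ⊓ (n : ℝ≥0∞) :=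
      fun n => measurable_id'.min measurable_const
    have hmono : Monotone fun (n : ℕ) (x : ℝ≥0∞) => x ⊓ (n : ℝ≥0∞) :=
      fun a b hab x => inf_le_inf_left _ (Nat.cast_le.mpr hab)
    have hls := lintegral_iSup (μ := Fstar) hmeas hmono
    rw [← hls]
    refine lintegral_congr fun x => ?_
    rw [← inf_iSup_eq, ENNReal.iSup_natCast, inf_top_eq]
  have hJtend : Tendsto (fun N : ℕ => ∫⁻ x, x ⊓ (N : ℝ≥0∞) ∂Fstar) atTop
      (𝓝 (∫⁻ x, x ∂Fstar)) := hJsup ▸ tendsto_atTop_iSup hJmono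
  have hdiff0 : Tendsto (fun N : ℕ => ((∫⁻ x, x ∂Fstar) - ∫⁻ x, x ⊓ (N : ℝ≥0∞) ∂Fstar).toReal)
      atTop (𝓝 0) := by
    have h := ENNReal.Tendsto.sub (tendsto_const_nhds (x := ∫⁻ x, x ∂Fstar)) hJtend
      (Or.inl hIne)
    rw [tsub_self] at h
    simpa [Function.comp_def] using (ENNReal.tendsto_toReal (by simp : (0:ℝ≥0∞) ≠ ⊤)).comp h
  -- the key convergence of first-moment integrals
  have hT : Tendsto (fun t : ℝ => ∫ x, x.toReal * f x ∂(empFreq m t)) atTop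
      (𝓝 (∫ x, x.toReal * f x ∂Fstar)) := by
    rw [Metric.tendsto_nhds]
    intro ε hε
    have hδpos : 0 < ε / (4 * (C + 1)) := by positivity
    set δ := ε / (4 * (C + 1)) with hδdef
    obtain ⟨N, hNlt⟩ := (hdiff0.eventually_lt_const hδpos).exists
    have hcontN : Continuous fun x : ℝ≥0∞ => (x ⊓ (N : ℝ≥0∞)).toReal := by
      rw [continuous_iff_continuousAt]
      intro x
      have hne' : x ⊓ (N : ℝ≥0∞) ≠ ⊤ :=
        (inf_le_right.trans_lt (ENNReal.natCast_lt_top N)).ne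
      exact (ENNReal.tendsto_toReal hne').comp
        ((continuous_id.min continuous_const).continuousAt)
    have hgN : Continuous fun x : ℝ≥0∞ => (x ⊓ (N : ℝ≥0∞)).toReal * f x := hcontN.mul hf
    -- Fstar-side bound
    have hsubF : ∫⁻ x, x - x ⊓ (N : ℝ≥0∞) ∂Fstar =
        (∫⁻ x, x ∂Fstar) - ∫⁻ x, x ⊓ (N : ℝ≥0∞) ∂Fstar :=
      lintegral_sub (measurable_id.min measurable_const) (hJne N)
        (ae_of_all _ fun x => inf_le_left)
    have hFbound : |(∫ x, x.toReal * f x ∂Fstar) -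
        ∫ x, (x ⊓ (N : ℝ≥0∞)).toReal * f x ∂Fstar| ≤ C * δ := by
      have h := trunc_bound Fstar hIne hf.measurable hC (N : ℝ≥0∞) (ENNReal.natCast_ne_top N)
      rw [hsubF] at h
      exact h.trans (mul_le_mul_of_nonneg_left hNlt.le hC0)
    -- convergence of truncated lintegrals along empFreq
    have hJt : Tendsto (fun t : ℝ => ∫⁻ x, x ⊓ (N : ℝ≥0∞) ∂(empFreq m t)) atTop
        (𝓝 (∫⁻ x, x ⊓ (N : ℝ≥0∞) ∂Fstar)) := by
      have heq : ∀ ν : Measure ℝ≥0∞, ∫ x, (x ⊓ (N : ℝ≥0∞)).toReal ∂ν =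
          (∫⁻ x, x ⊓ (N : ℝ≥0∞) ∂ν).toReal := fun ν =>
        integral_toReal (measurable_id.min measurable_const).aemeasurable
          (ae_of_all _ fun x => inf_le_right.trans_lt (ENNReal.natCast_lt_top N))
      have h1 := hweak _ hcontN
      rw [heq] at h1
      have h2 : Tendsto (fun t : ℝ => (∫⁻ x, x ⊓ (N : ℝ≥0∞) ∂(empFreq m t)).toReal) atTop
          (𝓝 ((∫⁻ x, x ⊓ (N : ℝ≥0∞) ∂Fstar).toReal)) := by
        refine h1.congr fun t => ?_
        exact heq (empFreq m t)
      have h3 := ENNReal.tendsto_ofReal h2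
      rw [ENNReal.ofReal_toReal (hJne N)] at h3
      refine Filter.Tendsto.congr' ?_ h3
      filter_upwards [eventually_gt_atTop 0] with t ht
      haveI := empFreq_prob m hdiv ht
      have hle : ∫⁻ x, x ⊓ (N : ℝ≥0∞) ∂(empFreq m t) ≤ (N : ℝ≥0∞) := by
        calc ∫⁻ x, x ⊓ (N : ℝ≥0∞) ∂(empFreq m t) ≤ ∫⁻ _, (N : ℝ≥0∞) ∂(empFreq m t) :=
              lintegral_mono fun x => inf_le_right
          _ = (N : ℝ≥0∞) := by simp
      exact ENNReal.ofReal_toReal (hle.trans_lt (ENNReal.natCast_lt_top N)).ne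
    -- convergence of the remainder term
    have hEt : Tendsto (fun t : ℝ => (∫⁻ x, x - x ⊓ (N : ℝ≥0∞) ∂(empFreq m t)).toReal) atTop
        (𝓝 (((∫⁻ x, x ∂Fstar) - ∫⁻ x, x ⊓ (N : ℝ≥0∞) ∂Fstar).toReal)) := by
      have hsub := ENNReal.Tendsto.sub hL1 hJt (Or.inr (hJne N))
      have h5 := (ENNReal.tendsto_toReal
        (show (∫⁻ x, x ∂Fstar) - ∫⁻ x, x ⊓ (N : ℝ≥0∞) ∂Fstar ≠ ⊤ from
          (tsub_le_self.trans_lt hfin).ne)).comp hsub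
      refine Filter.Tendsto.congr' ?_ h5
      filter_upwards [eventually_gt_atTop 0] with t ht
      haveI := empFreq_prob m hdiv ht
      have hKne : (∫⁻ x, x ∂(empFreq m t)) ≠ ⊤ := by
        rw [lintegral_empFreq m hm hdiv ht]
        have hl := ell_pos m hdiv ht
        exact (ENNReal.div_lt_top ENNReal.ofReal_ne_top
          (Nat.cast_ne_zero.mpr (by omega))).ne
      have hJtne : (∫⁻ x, x ⊓ (N : ℝ≥0∞) ∂(empFreq m t)) ≠ ⊤ :=
        ((lintegral_mono fun x => inf_le_left).trans_lt hKne.lt_top).ne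
      have hls : ∫⁻ x, x - x ⊓ (N : ℝ≥0∞) ∂(empFreq m t) =
          (∫⁻ x, x ∂(empFreq m t)) - ∫⁻ x, x ⊓ (N : ℝ≥0∞) ∂(empFreq m t) :=
        lintegral_sub (measurable_id'.min measurable_const) hJtne
          (ae_of_all _ fun x => inf_le_left)
      show ((∫⁻ x, x ∂(empFreq m t)) - ∫⁻ x, x ⊓ (N : ℝ≥0∞) ∂(empFreq m t)).toReal = _
      rw [hls]
    -- eventual bound 1
    have hEv1 : ∀ᶠ t : ℝ in atTop,
        |(∫ x, x.toReal * f x ∂(empFreq m t)) -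
          ∫ x, (x ⊓ (N : ℝ≥0∞)).toReal * f x ∂(empFreq m t)| ≤ C * δ := by
      filter_upwards [hEt.eventually_lt_const hNlt, eventually_gt_atTop 0] with t hE ht
      haveI := empFreq_prob m hdiv ht
      have hKne : (∫⁻ x, x ∂(empFreq m t)) ≠ ⊤ := by
        rw [lintegral_empFreq m hm hdiv ht]
        have hl := ell_pos m hdiv ht
        exact (ENNReal.div_lt_top ENNReal.ofReal_ne_top
          (Nat.cast_ne_zero.mpr (by omega))).ne
      have h := trunc_bound (empFreq m t) hKne hf.measurable hC (N : ℝ≥0∞)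
        (ENNReal.natCast_ne_top N)
      exact h.trans (mul_le_mul_of_nonneg_left hE.le hC0)
    -- eventual bound 2 (weak convergence of the truncated test function)
    have hEv2 : ∀ᶠ t : ℝ in atTop,
        |(∫ x, (x ⊓ (N : ℝ≥0∞)).toReal * f x ∂(empFreq m t)) -
          ∫ x, (x ⊓ (N : ℝ≥0∞)).toReal * f x ∂Fstar| < δ := by
      have h := Metric.tendsto_nhds.mp (hweak _ hgN) δ hδpos
      simpa [Real.dist_eq] using h
    filter_upwards [hEv1, hEv2] with t h1 h2
    rw [Real.dist_eq]
    have htri : |(∫ x, x.toReal * f x ∂(empFreq m t)) - ∫ x, x.toReal * f x ∂Fstar| ≤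
        |(∫ x, x.toReal * f x ∂(empFreq m t)) -
          ∫ x, (x ⊓ (N : ℝ≥0∞)).toReal * f x ∂(empFreq m t)| +
        |(∫ x, (x ⊓ (N : ℝ≥0∞)).toReal * f x ∂(empFreq m t)) -
          ∫ x, (x ⊓ (N : ℝ≥0∞)).toReal * f x ∂Fstar| +
        |(∫ x, (x ⊓ (N : ℝ≥0∞)).toReal * f x ∂Fstar) - ∫ x, x.toReal * f x ∂Fstar| := by
      have := abs_sub_le (∫ x, x.toReal * f x ∂(empFreq m t))
        (∫ x, (x ⊓ (N : ℝ≥0∞)).toReal * f x ∂(empFreq m t)) (∫ x, x.toReal * f x ∂Fstar)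
      have h2' := abs_sub_le (∫ x, (x ⊓ (N : ℝ≥0∞)).toReal * f x ∂(empFreq m t))
        (∫ x, (x ⊓ (N : ℝ≥0∞)).toReal * f x ∂Fstar) (∫ x, x.toReal * f x ∂Fstar)
      linarith
    have hlast : |(∫ x, (x ⊓ (N : ℝ≥0∞)).toReal * f x ∂Fstar) -
        ∫ x, x.toReal * f x ∂Fstar| ≤ C * δ := by
      rw [abs_sub_comm]; exact hFbound
    have h4 : 4 * (C + 1) * δ = ε := by
      rw [hδdef]; field_simp
    nlinarith [h1, h2, hlast, htri, hδpos, hC0]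
  -- assemble: the scaling factor and the change of measure
  have hscale : Tendsto (fun t : ℝ => (ell m t : ℝ) / t) atTop (𝓝 A.toReal) := by
    have h1 := (ENNReal.tendsto_toReal hAnetop).comp hA
    refine Filter.Tendsto.congr' ?_ h1
    filter_upwards [eventually_gt_atTop 0] with t ht
    show (ENNReal.ofReal ((ell m t : ℝ) / t)).toReal = (ell m t : ℝ) / t
    exact ENNReal.toReal_ofReal (div_nonneg (Nat.cast_nonneg _) ht.le)
  have hform : (fun t : ℝ => ((ell m t : ℝ) / t) * ∫ x, x.toReal * f x ∂(empFreq m t))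
      =ᶠ[atTop] fun t : ℝ => ∫ x, f x ∂(empMass m t) := by
    filter_upwards [eventually_gt_atTop 0] with t ht
    have hl := ell_pos m hdiv ht
    have hl0 : (ell m t : ℝ) ≠ 0 := Nat.cast_ne_zero.mpr (by omega)
    rw [integral_empMass hf.measurable m hm hdiv ht,
      integral_empFreq (f := fun x => x.toReal * f x) (ENNReal.measurable_toReal.mul hf.measurable) m t]
    have e1 : ∀ a : ℝ, 0 ≤ a →
        (ENNReal.ofReal a).toReal * f (ENNReal.ofReal a) = a * f (ENNReal.ofReal a) :=
      fun a ha => by rw [ENNReal.toReal_ofReal ha]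
    rw [e1 _ (tbar_pos m hdiv ht).le,
      Finset.sum_congr rfl (fun k _ => e1 _ (hm k).le)]
    have hsum : ∑ k ∈ Finset.Icc 1 (ell m t - 1), (m k / t) * f (ENNReal.ofReal (m k)) =
        (∑ k ∈ Finset.Icc 1 (ell m t - 1), m k * f (ENNReal.ofReal (m k))) / t := by
      rw [Finset.sum_div]
      exact Finset.sum_congr rfl fun k _ => by ring
    rw [hsum]
    field_simp
  have hfinal := hscale.mul hT
  exact Filter.Tendsto.congr' hform hfinal
end
end

section
/- (Cèsaro divergent masses are regular.) If the mass sequence m_k > 0 satisfies (m_1 + … + m_n)/n → ∞, then the empirical mass measures μ_t converge weakly on [0,∞] to δ_∞; i.e., for every a > 0, μ_t([0,a]) → 0 as t → ∞. -/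
open MeasureTheory ProbabilityTheory Filter
open scoped ENNReal Topology BigOperators

noncomputable section

lemma Mpart_tendsto_aux (m : ℕ → ℝ)
    (hces : Tendsto (fun n : ℕ => Mpart m n / n) atTop atTop) :
    Tendsto (Mpart m) atTop atTop := by
  refine tendsto_atTop_mono' atTop ?_ tendsto_natCast_atTop_atTop
  · filter_upwards [hces.eventually_ge_atTop 1, eventually_ge_atTop 1] with n h1 h2
    have hn : (0:ℝ) < n := by exact_mod_cast h2
    have := (le_div_iff₀ hn).mp h1
    linarith

lemma ell_div_tendsto (m : ℕ → ℝ)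
    (hces : Tendsto (fun n : ℕ => Mpart m n / n) atTop atTop) :
    Tendsto (fun t : ℝ => (ell m t : ℝ) / t) atTop (𝓝 0) := by
  have hM := Mpart_tendsto_aux m hces
  rw [Metric.tendsto_atTop]
  intro ε hε
  obtain ⟨N, hN⟩ := eventually_atTop.mp ((tendsto_atTop.mp hces) (2/ε))
  refine ⟨max (2/ε) ((N+1)/ε) + 1, fun t ht => ?_⟩
  have ht2 : 2/ε < t := by
    have := le_max_left (2/ε) ((N+1)/ε); linarith
  have htN : ((N:ℝ)+1)/ε < t := by
    have := le_max_right (2/ε) ((N+1)/ε); linarith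
  have htpos : 0 < t := lt_trans (by positivity) ht2
  rw [Real.dist_eq, sub_zero, abs_of_nonneg (by positivity), div_lt_iff₀ htpos]
  rw [mul_comm ε t]
  set ℓ := ell m t with hℓdef
  have h4 : 2 < t * ε := by rw [div_lt_iff₀ hε] at ht2; linarith
  by_cases hcase : ℓ ≤ N + 1
  · have hc : (ℓ:ℝ) ≤ (N:ℝ) + 1 := by exact_mod_cast hcase
    have : (N:ℝ) + 1 < t * ε := by rw [div_lt_iff₀ hε] at htN; linarith
    linarith
  · push_neg at hcase
    have h1ℓ : 1 ≤ ℓ := by omega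
    have hsub : N ≤ ℓ - 1 := by omega
    have hlt : Mpart m (ℓ - 1) < t := by
      by_contra h
      push_neg at h
      have hmem : ℓ - 1 ∈ {l : ℕ | t ≤ Mpart m l} := h
      have h9 : ell m t ≤ ℓ - 1 := Nat.sInf_le hmem
      omega
    have hNn := hN (ℓ - 1) hsub
    have hn1 : 1 ≤ ℓ - 1 := by omega
    have hnpos : (0:ℝ) < ((ℓ - 1 : ℕ):ℝ) := by exact_mod_cast hn1
    have h2 : (2/ε) * ((ℓ-1:ℕ):ℝ) ≤ Mpart m (ℓ-1) := (le_div_iff₀ hnpos).mp hNn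
    have h3 : 2 * ((ℓ-1:ℕ):ℝ) < t * ε := by
      have h5 : (2/ε) * ((ℓ-1:ℕ):ℝ) < t := lt_of_le_of_lt h2 hlt
      have h6 := mul_lt_mul_of_pos_right h5 hε
      have h7 : (2/ε) * ((ℓ-1:ℕ):ℝ) * ε = 2 * ((ℓ-1:ℕ):ℝ) := by
        field_simp
      rw [h7] at h6
      linarith
    have hc : (ℓ:ℝ) = ((ℓ-1:ℕ):ℝ) + 1 := by
      have h8 : ℓ - 1 + 1 = ℓ := by omega
      rw [← h8]; push_cast; ring
    linarith

/-- Cèsaro divergent masses are regular: if `(m_1 + … + m_n)/n → ∞`, then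
`μ_t → δ_∞` weakly, i.e. `μ_t([0,a]) → 0` for every `a > 0`. -/
theorem cesaro_divergent_regular (m : ℕ → ℝ) (hm : ∀ k, 0 < m k)
    (hces : Tendsto (fun n : ℕ => Mpart m n / n) atTop atTop) :
    ∀ a > (0:ℝ), Tendsto (fun t : ℝ => empMass m t (Set.Iic (ENNReal.ofReal a)))
      atTop (𝓝 0) := by
  intro a ha
  have hL := ell_div_tendsto m hces
  have hg : Tendsto (fun t : ℝ => a / t + (ell m t : ℝ) * (a / t)) atTop (𝓝 0) := by
    have h1 : Tendsto (fun t : ℝ => a / t) atTop (𝓝 0) :=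
      tendsto_const_nhds.div_atTop tendsto_id
    have h2 : Tendsto (fun t : ℝ => (ell m t : ℝ) * (a / t)) atTop (𝓝 0) := by
      have h3 := hL.const_mul a
      rw [mul_zero] at h3
      have : (fun t : ℝ => (ell m t : ℝ) * (a / t)) =
          fun t : ℝ => a * ((ell m t : ℝ) / t) := by
        funext t; ring
      rw [this]
      exact h3
    simpa using h1.add h2
  have key : Tendsto (fun t : ℝ => ENNReal.ofReal (a / t + (ell m t : ℝ) * (a / t)))
      atTop (𝓝 0) := by
    have := ENNReal.tendsto_ofReal hg
    simpa using this
  refine tendsto_of_tendsto_of_tendsto_of_le_of_le' tendsto_const_nhds key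
    (Eventually.of_forall fun t => zero_le) ?_
  filter_upwards [eventually_gt_atTop 0] with t htpos
  have hmeas : MeasurableSet (Set.Iic (ENNReal.ofReal a)) := measurableSet_Iic
  have hterm : ∀ r : ℝ, ENNReal.ofReal (r / t) *
      (Set.Iic (ENNReal.ofReal a)).indicator 1 (ENNReal.ofReal r)
        ≤ ENNReal.ofReal (a / t) := by
    intro r
    by_cases h : ENNReal.ofReal r ∈ Set.Iic (ENNReal.ofReal a)
    · rw [Set.indicator_of_mem h, Pi.one_apply, mul_one]
      have hr : r ≤ a := (ENNReal.ofReal_le_ofReal_iff ha.le).mp h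
      exact ENNReal.ofReal_le_ofReal (by gcongr)
    · rw [Set.indicator_of_notMem h, mul_zero]
      exact zero_le
  have happ : empMass m t (Set.Iic (ENNReal.ofReal a)) =
      ENNReal.ofReal (tbar m t / t) *
        (Set.Iic (ENNReal.ofReal a)).indicator 1 (ENNReal.ofReal (tbar m t)) +
      ∑ k ∈ Finset.Icc 1 (ell m t - 1), ENNReal.ofReal (m k / t) *
        (Set.Iic (ENNReal.ofReal a)).indicator 1 (ENNReal.ofReal (m k)) := by
    rw [empMass, Measure.add_apply, Measure.smul_apply,
      Measure.dirac_apply' _ hmeas, Measure.finset_sum_apply]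
    simp only [Measure.smul_apply, Measure.dirac_apply' _ hmeas, smul_eq_mul]
  rw [happ]
  have hsum : ∑ k ∈ Finset.Icc 1 (ell m t - 1), ENNReal.ofReal (m k / t) *
      (Set.Iic (ENNReal.ofReal a)).indicator 1 (ENNReal.ofReal (m k))
        ≤ ENNReal.ofReal ((ell m t : ℝ) * (a / t)) := by
    calc ∑ k ∈ Finset.Icc 1 (ell m t - 1), ENNReal.ofReal (m k / t) *
          (Set.Iic (ENNReal.ofReal a)).indicator 1 (ENNReal.ofReal (m k))
        ≤ ∑ _k ∈ Finset.Icc 1 (ell m t - 1), ENNReal.ofReal (a/t) :=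
          Finset.sum_le_sum fun k _ => hterm (m k)
      _ = ((ell m t - 1 : ℕ) : ℝ≥0∞) * ENNReal.ofReal (a/t) := by
          rw [Finset.sum_const, Nat.card_Icc, nsmul_eq_mul]
          norm_num
      _ ≤ ((ell m t : ℕ) : ℝ≥0∞) * ENNReal.ofReal (a/t) := by
          gcongr
          exact_mod_cast Nat.sub_le _ 1
      _ = ENNReal.ofReal ((ell m t : ℝ)) * ENNReal.ofReal (a/t) := by
          rw [ENNReal.ofReal_natCast]
      _ = ENNReal.ofReal ((ell m t : ℝ) * (a / t)) :=
          (ENNReal.ofReal_mul (Nat.cast_nonneg _)).symm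
  calc ENNReal.ofReal (tbar m t / t) *
        (Set.Iic (ENNReal.ofReal a)).indicator 1 (ENNReal.ofReal (tbar m t)) +
      ∑ k ∈ Finset.Icc 1 (ell m t - 1), ENNReal.ofReal (m k / t) *
        (Set.Iic (ENNReal.ofReal a)).indicator 1 (ENNReal.ofReal (m k))
      ≤ ENNReal.ofReal (a/t) + ENNReal.ofReal ((ell m t:ℝ)*(a/t)) :=
        add_le_add (hterm (tbar m t)) hsum
    _ = ENNReal.ofReal (a/t + (ell m t:ℝ)*(a/t)) :=
        (ENNReal.ofReal_add (div_nonneg ha.le htpos.le)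
          (mul_nonneg (Nat.cast_nonneg _) (div_nonneg ha.le htpos.le))).symm
end
end

section
/- (Second moment summability for bounded increments.) Let m_k ∈ (0,1] with M_n → ∞ and N(x) = #{k : M_k/m_k ≤ x}. Then for every x, ∑_{k : M_k/m_k ≥ |x|} (m_k/M_k)² ≤ 2 ∫_{|x|}^∞ N(y)/y³ dy. Moreover, if F* is the distribution of |X_*| with E[|X_*|^{1+γ}] < ∞ for some γ ∈ (0,1) and N(y) ≤ C y^{1+γ}, then ∫ x² ∫_{y ≥ |x|} N(y)/y³ dy dF*(x) ≤ (C/(1−γ)) E[|X_*|^{1+γ}] < ∞. -/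
open MeasureTheory ProbabilityTheory Filter
open scoped ENNReal Topology BigOperators

noncomputable section

/-- `N(x) = #{k : M_k / m_k ≤ x}`. -/
def Ncount (m : ℕ → ℝ) (x : ℝ) : ℕ := Set.ncard {k : ℕ | 1 ≤ k ∧ Mpart m k / m k ≤ x}

section Aux
variable {m : ℕ → ℝ}

lemma Mpart_pos (hm : ∀ k, 0 < m k) {k : ℕ} (hk : 1 ≤ k) : 0 < Mpart m k :=
  Finset.sum_pos (fun i _ => hm i) ⟨k, Finset.mem_Icc.2 ⟨hk, le_rfl⟩⟩

lemma m_le_Mpart (hm : ∀ k, 0 < m k) {k : ℕ} (hk : 1 ≤ k) : m k ≤ Mpart m k :=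
  Finset.single_le_sum (fun i _ => (hm i).le) (Finset.mem_Icc.2 ⟨hk, le_rfl⟩)

lemma one_le_ratio (hm : ∀ k, 0 < m k) {k : ℕ} (hk : 1 ≤ k) : 1 ≤ Mpart m k / m k :=
  (one_le_div (hm k)).2 (m_le_Mpart hm hk)

lemma Mpart_le_ratio (hm : ∀ k, 0 < m k) (hm1 : ∀ k, m k ≤ 1) {k : ℕ} (hk : 1 ≤ k) :
    Mpart m k ≤ Mpart m k / m k := by
  rw [le_div_iff₀ (hm k)]
  calc Mpart m k * m k ≤ Mpart m k * 1 :=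
        mul_le_mul_of_nonneg_left (hm1 k) (Mpart_pos hm hk).le
    _ = Mpart m k := mul_one _

lemma Sset_finite (hm : ∀ k, 0 < m k) (hm1 : ∀ k, m k ≤ 1)
    (hdiv : Tendsto (Mpart m) atTop atTop) (y : ℝ) :
    {k : ℕ | 1 ≤ k ∧ Mpart m k / m k ≤ y}.Finite := by
  obtain ⟨K, hK⟩ := Filter.eventually_atTop.1 (hdiv.eventually_ge_atTop (y + 1))
  apply (Set.finite_Iio K).subset
  rintro k ⟨hk1, hky⟩
  by_contra h
  simp only [Set.mem_Iio, not_lt] at h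
  have h1 := hK k h
  have h2 := Mpart_le_ratio hm hm1 hk1
  linarith

lemma Ncount_mono (hm : ∀ k, 0 < m k) (hm1 : ∀ k, m k ≤ 1)
    (hdiv : Tendsto (Mpart m) atTop atTop) :
    Monotone (fun y => (Ncount m y : ℝ)) := by
  intro a b hab
  have hsub : {k : ℕ | 1 ≤ k ∧ Mpart m k / m k ≤ a} ⊆ {k : ℕ | 1 ≤ k ∧ Mpart m k / m k ≤ b} :=
    fun k ⟨h1, h2⟩ => ⟨h1, h2.trans hab⟩
  simp only [Ncount, Nat.cast_le]
  exact Set.ncard_le_ncard hsub (Sset_finite hm hm1 hdiv b)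

lemma Ncount_eq_zero (hm : ∀ k, 0 < m k) {y : ℝ} (hy : y < 1) : Ncount m y = 0 := by
  have : {k : ℕ | 1 ≤ k ∧ Mpart m k / m k ≤ y} = ∅ := by
    ext k
    simp only [Set.mem_setOf_eq, Set.mem_empty_iff_false, iff_false, not_and]
    intro hk1 hk2
    have := one_le_ratio hm hk1
    linarith
  rw [Ncount, this, Set.ncard_empty]

end Aux

/-- Second moment summability for bounded increments:
`∑_{k : M_k/m_k ≥ |x|} (m_k/M_k)² ≤ 2 ∫_{|x|}^∞ N(y)/y³ dy`, and the resulting double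
integral against the law `F_*` of `|X_*|` is bounded by `(C/(1−γ)) E[|X_*|^{1+γ}] < ∞`. -/
theorem second_moment_summability
    {Ω : Type*} [MeasureSpace Ω] [IsProbabilityMeasure (ℙ : Measure Ω)]
    (m : ℕ → ℝ) (hm : ∀ k, 0 < m k) (hm1 : ∀ k, m k ≤ 1)
    (hdiv : Tendsto (Mpart m) atTop atTop)
    (γ C : ℝ) (hγ : γ ∈ Set.Ioo (0:ℝ) 1) (hC : 0 < C)
    (hN : ∀ y > (0:ℝ), (Ncount m y : ℝ) ≤ C * y ^ (1 + γ))
    (Xstar : Ω → ℝ) (hXm : Measurable Xstar)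
    (hX : Integrable (fun ω => |Xstar ω| ^ (1 + γ)) ℙ) :
    (∀ x : ℝ,
      (∑' k : ℕ, if 1 ≤ k ∧ |x| ≤ Mpart m k / m k then (m k / Mpart m k) ^ 2 else 0)
        ≤ 2 * ∫ y in Set.Ioi |x|, (Ncount m y : ℝ) / y ^ 3) ∧
    (∫ x, x ^ 2 * (∫ y in Set.Ioi |x|, (Ncount m y : ℝ) / y ^ 3)
        ∂(Measure.map (fun ω => |Xstar ω|) ℙ)
      ≤ (C / (1 - γ)) * ∫ ω, |Xstar ω| ^ (1 + γ) ∂ℙ) := by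
  obtain ⟨hγ0, hγ1⟩ := hγ
  have hNmeas : Measurable fun y : ℝ => (Ncount m y : ℝ) :=
    (Ncount_mono hm hm1 hdiv).measurable
  have hNnn : ∀ y : ℝ, (0:ℝ) ≤ (Ncount m y : ℝ) := fun y => Nat.cast_nonneg _
  set gdom : ℝ → ℝ := Set.indicator (Set.Ici (1:ℝ)) (fun y => C * y ^ (γ - 2)) with hgdomdef
  have hgdom_int : Integrable gdom := by
    have h1 : IntegrableOn (fun y : ℝ => C * y ^ (γ - 2)) (Set.Ici (1:ℝ)) := by
      rw [integrableOn_Ici_iff_integrableOn_Ioi]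
      exact (integrableOn_Ioi_rpow_of_lt (by linarith) one_pos).const_mul C
    exact h1.integrable_indicator measurableSet_Ici
  have hfrac_nonneg : ∀ y : ℝ, 0 < y → 0 ≤ (Ncount m y : ℝ) / y ^ 3 := fun y hy =>
    div_nonneg (hNnn y) (by positivity)
  have hfrac_le : ∀ y : ℝ, 0 < y → (Ncount m y : ℝ) / y ^ 3 ≤ gdom y := by
    intro y hy
    rcases le_or_gt 1 y with h1 | h1
    · rw [hgdomdef, Set.indicator_of_mem (Set.mem_Ici.2 h1)]
      rw [div_le_iff₀ (by positivity : (0:ℝ) < y ^ 3)]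
      calc (Ncount m y : ℝ) ≤ C * y ^ (1 + γ) := hN y hy
        _ = C * y ^ (γ - 2) * y ^ 3 := by
            rw [mul_assoc, ← Real.rpow_natCast y 3, ← Real.rpow_add hy,
              show γ - 2 + ((3:ℕ):ℝ) = 1 + γ by push_cast; ring]
    · have h0 : Ncount m y = 0 := Ncount_eq_zero hm h1
      rw [hgdomdef, Set.indicator_of_notMem (by simpa using h1.not_ge)]
      simp [h0]
  have hInt : ∀ a : ℝ, 0 ≤ a →
      IntegrableOn (fun y => (Ncount m y : ℝ) / y ^ 3) (Set.Ioi a) := by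
    intro a ha
    refine Integrable.mono' hgdom_int.restrict
      ((hNmeas.div (measurable_id.pow_const 3)).aestronglyMeasurable) ?_
    rw [ae_restrict_iff' measurableSet_Ioi]
    refine ae_of_all _ fun y hy => ?_
    have hy0 : 0 < y := ha.trans_lt hy
    rw [Real.norm_eq_abs, abs_of_nonneg (hfrac_nonneg y hy0)]
    exact hfrac_le y hy0
  have hI_nonneg : ∀ x : ℝ, 0 ≤ ∫ y in Set.Ioi |x|, (Ncount m y : ℝ) / y ^ 3 := fun x =>
    setIntegral_nonneg measurableSet_Ioi fun y hy =>
      hfrac_nonneg y ((abs_nonneg x).trans_lt hy)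
  constructor
  · -- Part 1
    intro x
    have ha0 : (0:ℝ) ≤ |x| := abs_nonneg x
    set w : ℝ → ℝ≥0∞ := fun y => ENNReal.ofReal (2 / y ^ 3) with hwdef
    have hwmeas : Measurable w := ENNReal.measurable_ofReal.comp
      (measurable_const.div (measurable_id.pow_const 3))
    set g : ℕ → ℝ → ℝ≥0∞ := fun k y =>
      if 1 ≤ k ∧ |x| ≤ Mpart m k / m k then (Set.Ioi (Mpart m k / m k)).indicator w y else 0
      with hgdef
    have hgmeas : ∀ k, Measurable (g k) := by
      intro k
      simp only [hgdef]
      split_ifs with h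
      · exact hwmeas.indicator measurableSet_Ioi
      · exact measurable_const
    have hterm : ∀ k : ℕ,
        ENNReal.ofReal (if 1 ≤ k ∧ |x| ≤ Mpart m k / m k
            then (m k / Mpart m k) ^ 2 else 0)
          = ∫⁻ y in Set.Ioi |x|, g k y := by
      intro k
      by_cases h : 1 ≤ k ∧ |x| ≤ Mpart m k / m k
      · simp only [hgdef, h, if_true, and_self]
        have hr1 : 1 ≤ Mpart m k / m k := one_le_ratio hm h.1
        have hr0 : 0 < Mpart m k / m k := zero_lt_one.trans_le hr1
        rw [lintegral_indicator measurableSet_Ioi,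
          Measure.restrict_restrict measurableSet_Ioi, Set.Ioi_inter_Ioi, max_eq_left h.2]
        have hint : IntegrableOn (fun y : ℝ => 2 / y ^ 3) (Set.Ioi (Mpart m k / m k)) := by
          refine IntegrableOn.congr_fun
            ((integrableOn_Ioi_rpow_of_lt (show (-3:ℝ) < -1 by norm_num)
              hr0).const_mul 2) (fun y hy => ?_) measurableSet_Ioi
          have hy0 : 0 < y := hr0.trans hy
          rw [Real.rpow_neg hy0.le, ← Real.rpow_natCast y 3]
          norm_num [div_eq_mul_inv]
        rw [hwdef, ← ofReal_integral_eq_lintegral_ofReal hint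
          ((ae_restrict_iff' measurableSet_Ioi).2 (ae_of_all _ fun y hy =>
            div_nonneg two_pos.le (pow_nonneg (hr0.trans hy).le 3)))]
        congr 1
        have hcalc : (∫ y in Set.Ioi (Mpart m k / m k), (2:ℝ) / y ^ 3)
            = 2 * ∫ y in Set.Ioi (Mpart m k / m k), y ^ (-3:ℝ) := by
          rw [← integral_const_mul]
          refine setIntegral_congr_fun measurableSet_Ioi fun y hy => ?_
          have hy0 : 0 < y := hr0.trans hy
          rw [Real.rpow_neg hy0.le, ← Real.rpow_natCast y 3]
          norm_num [div_eq_mul_inv]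
        rw [hcalc, integral_Ioi_rpow_of_lt (by norm_num) hr0]
        have h2 : (-3:ℝ) + 1 = -2 := by norm_num
        rw [h2]
        have hmM : m k / Mpart m k = (Mpart m k / m k)⁻¹ := by
          rw [inv_div]
        rw [hmM, inv_pow,
          show ((Mpart m k / m k) ^ 2)⁻¹ = (Mpart m k / m k) ^ (-2:ℝ) by
            rw [Real.rpow_neg hr0.le,
              show ((2:ℝ)) = ((2:ℕ):ℝ) by norm_num, Real.rpow_natCast]]
        ring
      · simp only [hgdef, h, if_false]
        simp
    have hptwise : ∀ y : ℝ,
        (∑' k, g k y) ≤ ENNReal.ofReal (2 * ((Ncount m y : ℝ) / y ^ 3)) := by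
      intro y
      rcases le_or_gt y 1 with hy1 | hy1
      · have hz : ∀ k, g k y = 0 := by
          intro k
          simp only [hgdef]
          split_ifs with h
          · exact Set.indicator_of_notMem (by
              simp only [Set.mem_Ioi, not_lt]
              exact hy1.trans (one_le_ratio hm h.1)) _
          · rfl
        simp only [hz, tsum_zero]
        exact zero_le
      · have hy0 : 0 < y := zero_lt_one.trans hy1
        have hfin := Sset_finite hm hm1 hdiv y
        have hsub : ∀ k, g k y ≤
            Set.indicator {k' : ℕ | 1 ≤ k' ∧ Mpart m k' / m k' ≤ y} (fun _ => w y) k := by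
          intro k
          simp only [hgdef]
          split_ifs with h
          · rcases lt_or_ge (Mpart m k / m k) y with hk | hk
            · rw [Set.indicator_of_mem (Set.mem_Ioi.2 hk) w, Set.indicator_of_mem
                (show k ∈ {k' : ℕ | 1 ≤ k' ∧ Mpart m k' / m k' ≤ y} from ⟨h.1, hk.le⟩)]
            · rw [Set.indicator_of_notMem (by simpa using hk)]
              exact zero_le
          · exact zero_le
        calc (∑' k, g k y)
            ≤ ∑' k, Set.indicator {k' : ℕ | 1 ≤ k' ∧ Mpart m k' / m k' ≤ y}
                (fun _ => w y) k := ENNReal.tsum_le_tsum hsub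
          _ = ∑ k ∈ hfin.toFinset, Set.indicator
                {k' : ℕ | 1 ≤ k' ∧ Mpart m k' / m k' ≤ y} (fun _ => w y) k :=
              tsum_eq_sum (fun k hk =>
                Set.indicator_of_notMem (fun hmem => hk (hfin.mem_toFinset.2 hmem)) _)
          _ = ∑ _k ∈ hfin.toFinset, w y :=
              Finset.sum_congr rfl fun k hk =>
                Set.indicator_of_mem (hfin.mem_toFinset.1 hk) _
          _ = (Ncount m y : ℝ≥0∞) * w y := by
              rw [Finset.sum_const, nsmul_eq_mul]
              congr 1
              rw [Ncount, Set.ncard_eq_toFinset_card _ hfin]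
          _ ≤ ENNReal.ofReal (2 * ((Ncount m y : ℝ) / y ^ 3)) := by
              rw [hwdef, ← ENNReal.ofReal_natCast,
                ← ENNReal.ofReal_mul (Nat.cast_nonneg _)]
              exact ENNReal.ofReal_le_ofReal (le_of_eq (by ring))
    have key : (∑' k : ℕ, ENNReal.ofReal
          (if 1 ≤ k ∧ |x| ≤ Mpart m k / m k then (m k / Mpart m k) ^ 2 else 0))
        ≤ ENNReal.ofReal (2 * ∫ y in Set.Ioi |x|, (Ncount m y : ℝ) / y ^ 3) := by
      calc (∑' k : ℕ, ENNReal.ofReal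
            (if 1 ≤ k ∧ |x| ≤ Mpart m k / m k then (m k / Mpart m k) ^ 2 else 0))
          = ∑' k : ℕ, ∫⁻ y in Set.Ioi |x|, g k y := tsum_congr hterm
        _ = ∫⁻ y in Set.Ioi |x|, ∑' k, g k y :=
            (lintegral_tsum fun k => (hgmeas k).aemeasurable).symm
        _ ≤ ∫⁻ y in Set.Ioi |x|, ENNReal.ofReal (2 * ((Ncount m y : ℝ) / y ^ 3)) :=
            lintegral_mono fun y => hptwise y
        _ = ENNReal.ofReal (∫ y in Set.Ioi |x|, 2 * ((Ncount m y : ℝ) / y ^ 3)) :=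
            (ofReal_integral_eq_lintegral_ofReal ((hInt |x| ha0).const_mul 2)
              ((ae_restrict_iff' measurableSet_Ioi).2 (ae_of_all _ fun y hy =>
                mul_nonneg two_pos.le (hfrac_nonneg y (ha0.trans_lt hy))))).symm
        _ = ENNReal.ofReal (2 * ∫ y in Set.Ioi |x|, (Ncount m y : ℝ) / y ^ 3) := by
            rw [integral_const_mul]
    have hterm_nonneg : ∀ k : ℕ,
        0 ≤ (if 1 ≤ k ∧ |x| ≤ Mpart m k / m k then (m k / Mpart m k) ^ 2 else 0) := by
      intro k
      split_ifs
      · exact sq_nonneg _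
      · exact le_rfl
    have hsum_ne_top : (∑' k : ℕ, ENNReal.ofReal
        (if 1 ≤ k ∧ |x| ≤ Mpart m k / m k then (m k / Mpart m k) ^ 2 else 0)) ≠ ⊤ :=
      (key.trans_lt ENNReal.ofReal_lt_top).ne
    have hsummable : Summable (fun k : ℕ =>
        (if 1 ≤ k ∧ |x| ≤ Mpart m k / m k then (m k / Mpart m k) ^ 2 else 0)) := by
      refine (ENNReal.summable_toReal hsum_ne_top).congr fun k => ?_
      rw [ENNReal.toReal_ofReal (hterm_nonneg k)]
    rw [← ENNReal.ofReal_tsum_of_nonneg hterm_nonneg hsummable] at key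
    exact (ENNReal.ofReal_le_ofReal_iff
      (mul_nonneg (by norm_num) (hI_nonneg x))).1 key
  · -- Part 2
    have habs_meas : Measurable fun ω => |Xstar ω| := hXm.abs
    have hfunc_cont : Continuous fun x : ℝ => (C / (1 - γ)) * |x| ^ (1 + γ) :=
      continuous_const.mul (continuous_abs.rpow_const fun x => Or.inr (by linarith))
    have hRHSmeas : AEStronglyMeasurable (fun x : ℝ => (C / (1 - γ)) * |x| ^ (1 + γ))
        (Measure.map (fun ω => |Xstar ω|) ℙ) := hfunc_cont.aestronglyMeasurable
    have hRHSint : Integrable (fun x : ℝ => (C / (1 - γ)) * |x| ^ (1 + γ))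
        (Measure.map (fun ω => |Xstar ω|) ℙ) := by
      rw [integrable_map_measure hRHSmeas habs_meas.aemeasurable]
      simp only [Function.comp_def, abs_abs]
      exact hX.const_mul _
    have hpoint : ∀ x : ℝ, x ^ 2 * (∫ y in Set.Ioi |x|, (Ncount m y : ℝ) / y ^ 3)
        ≤ (C / (1 - γ)) * |x| ^ (1 + γ) := by
      intro x
      set b := max |x| 1 with hbdef
      have hb1 : 1 ≤ b := le_max_right _ _
      have hb0 : 0 < b := zero_lt_one.trans_le hb1
      have step1 : (∫ y in Set.Ioi |x|, (Ncount m y : ℝ) / y ^ 3)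
          ≤ ∫ y in Set.Ioi |x|, gdom y :=
        setIntegral_mono_on (hInt |x| (abs_nonneg x)) hgdom_int.integrableOn
          measurableSet_Ioi (fun y hy => hfrac_le y ((abs_nonneg x).trans_lt hy))
      have step2 : (∫ y in Set.Ioi |x|, gdom y) = ∫ y in Set.Ioi b, C * y ^ (γ - 2) := by
        rw [hgdomdef, setIntegral_indicator measurableSet_Ici]
        rcases le_or_gt 1 |x| with hx1 | hx1
        · have hseteq : Set.Ioi |x| ∩ Set.Ici (1:ℝ) = Set.Ioi |x| :=
            Set.inter_eq_left.2 fun y hy => hx1.trans (le_of_lt hy)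
          rw [hbdef, max_eq_left hx1, hseteq]
        · have hseteq : Set.Ioi |x| ∩ Set.Ici (1:ℝ) = Set.Ici 1 :=
            Set.inter_eq_right.2 fun y hy => lt_of_lt_of_le hx1 hy
          rw [hbdef, max_eq_right hx1.le, hseteq, integral_Ici_eq_integral_Ioi]
      have step3 : (∫ y in Set.Ioi b, C * y ^ (γ - 2)) = C * b ^ (γ - 1) / (1 - γ) := by
        rw [integral_const_mul, integral_Ioi_rpow_of_lt (by linarith) hb0,
          show γ - 2 + 1 = γ - 1 by ring]
        have h1γ : (1:ℝ) - γ ≠ 0 := by linarith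
        have h2γ : γ - 1 ≠ 0 := by linarith
        generalize b ^ (γ - 1) = t
        field_simp
        ring
      have hIle : (∫ y in Set.Ioi |x|, (Ncount m y : ℝ) / y ^ 3)
          ≤ C * b ^ (γ - 1) / (1 - γ) := by
        rw [← step3, ← step2]; exact step1
      have h2 : x ^ 2 * (∫ y in Set.Ioi |x|, (Ncount m y : ℝ) / y ^ 3)
          ≤ x ^ 2 * (C * b ^ (γ - 1) / (1 - γ)) :=
        mul_le_mul_of_nonneg_left hIle (sq_nonneg x)
      refine h2.trans ?_
      rcases eq_or_ne x 0 with rfl | hx0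
      · simp [Real.zero_rpow (by linarith : (1:ℝ) + γ ≠ 0)]
      · have hxpos : 0 < |x| := abs_pos.2 hx0
        have hkey : x ^ 2 * b ^ (γ - 1) ≤ |x| ^ (1 + γ) := by
          rcases le_or_gt 1 |x| with hx1 | hx1
          · rw [hbdef, max_eq_left hx1, ← sq_abs x, ← Real.rpow_natCast |x| 2,
              ← Real.rpow_add hxpos]
            apply le_of_eq
            congr 1
            push_cast
            ring
          · rw [hbdef, max_eq_right hx1.le, Real.one_rpow, mul_one, ← sq_abs x,
              ← Real.rpow_natCast |x| 2]
            apply Real.rpow_le_rpow_of_exponent_ge hxpos hx1.le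
            push_cast
            linarith
        calc x ^ 2 * (C * b ^ (γ - 1) / (1 - γ))
            = (C / (1 - γ)) * (x ^ 2 * b ^ (γ - 1)) := by ring
          _ ≤ (C / (1 - γ)) * (|x| ^ (1 + γ)) :=
            mul_le_mul_of_nonneg_left hkey (div_nonneg hC.le (by linarith))
    have hmono := integral_mono_of_nonneg
      (ae_of_all _ fun x : ℝ => mul_nonneg (sq_nonneg x) (hI_nonneg x))
      hRHSint (ae_of_all _ hpoint)
    refine hmono.trans ?_
    rw [integral_map habs_meas.aemeasurable hRHSmeas]
    simp only [abs_abs]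
    rw [integral_const_mul]
end
end
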